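/- arXiv:0902.2090 — 6 statements merged into one kernel-verified Lean document; each statement's English description precedes it below -/
import Mathlib

section
/- Let n ≥ 2, m ∈ {1,…,n} and β > 1/m, and set σ(k) = H_m(k)^β for k in the open positive cone Γ₊ ⊂ ℝ^n. Then for every k ∈ Γ₊ one has Σ_{i=1}^n ∂σ/∂k_i(k) ≥ mβ · σ(k)^{1 − 1/(mβ)}. -/
set_option linter.unusedSectionVars false

open Finset

noncomputable section

variable {ι : Type*} [DecidableEq ι]

/-- Elementary symmetric sum of `k` over a finset `s`. -/
def esum (s : Finset ι) (k : ι → ℝ) (j : ℕ) : ℝ :=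
  ∑ t ∈ s.powersetCard j, ∏ i ∈ t, k i

/-- Normalized elementary symmetric mean. -/
def Hsym (s : Finset ι) (k : ι → ℝ) (j : ℕ) : ℝ :=
  esum s k j / (s.card.choose j : ℝ)

lemma esum_zero (s : Finset ι) (k : ι → ℝ) : esum s k 0 = 1 := by
  simp [esum]

lemma esum_of_card_lt {s : Finset ι} {j : ℕ} (h : s.card < j) (k : ι → ℝ) :
    esum s k j = 0 := by
  simp [esum, Finset.powersetCard_eq_empty.2 h]

lemma esum_nonneg {s : Finset ι} {k : ι → ℝ} (hk : ∀ i ∈ s, 0 ≤ k i) (j : ℕ) :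
    0 ≤ esum s k j := by
  refine Finset.sum_nonneg fun t ht => Finset.prod_nonneg fun i hi => ?_
  exact hk i ((Finset.mem_powersetCard.1 ht).1 hi)

lemma esum_pos {s : Finset ι} {k : ι → ℝ} (hk : ∀ i ∈ s, 0 < k i) {j : ℕ}
    (hj : j ≤ s.card) : 0 < esum s k j := by
  refine Finset.sum_pos (fun t ht => Finset.prod_pos fun i hi => ?_) ?_
  · exact hk i ((Finset.mem_powersetCard.1 ht).1 hi)
  · exact Finset.powersetCard_nonempty.2 hj

lemma esum_insert {a : ι} {s : Finset ι} (h : a ∉ s) (k : ι → ℝ) (j : ℕ) :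
    esum (insert a s) k (j + 1) = esum s k (j + 1) + k a * esum s k j := by
  classical
  rw [esum, Finset.powersetCard_succ_insert h, Finset.sum_union]
  · congr 1
    rw [Finset.sum_image]
    · rw [esum, Finset.mul_sum]
      refine Finset.sum_congr rfl fun t ht => ?_
      have hat : a ∉ t := fun hat => h ((Finset.mem_powersetCard.1 ht).1 hat)
      rw [Finset.prod_insert hat]
    · intro t ht u hu htu
      have hat : a ∉ t := fun hat => h ((Finset.mem_powersetCard.1 ht).1 hat)
      have hau : a ∉ u := fun hau => h ((Finset.mem_powersetCard.1 hu).1 hau)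
      rw [← Finset.erase_insert hat, ← Finset.erase_insert hau, htu]
  · rw [Finset.disjoint_right]
    intro t ht hts
    obtain ⟨u, hu, rfl⟩ := Finset.mem_image.1 ht
    have : a ∈ insert a u := Finset.mem_insert_self a u
    exact h ((Finset.mem_powersetCard.1 hts).1 this)

lemma Hsym_zero (s : Finset ι) (k : ι → ℝ) : Hsym s k 0 = 1 := by
  simp [Hsym, esum_zero]

lemma Hsym_nonneg {s : Finset ι} {k : ι → ℝ} (hk : ∀ i ∈ s, 0 ≤ k i) (j : ℕ) :
    0 ≤ Hsym s k j :=
  div_nonneg (esum_nonneg hk j) (by positivity)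

lemma Hsym_pos {s : Finset ι} {k : ι → ℝ} (hk : ∀ i ∈ s, 0 < k i) {j : ℕ}
    (hj : j ≤ s.card) : 0 < Hsym s k j :=
  div_pos (esum_pos hk hj) (by exact_mod_cast Nat.choose_pos hj)

lemma Hsym_of_card_lt {s : Finset ι} {j : ℕ} (h : s.card < j) (k : ι → ℝ) :
    Hsym s k j = 0 := by
  simp [Hsym, esum_of_card_lt h]

lemma Hsym_insert {a : ι} {s : Finset ι} (h : a ∉ s) (k : ι → ℝ) (j : ℕ) :
    Hsym (insert a s) k j =
      ((((s.card + 1 : ℕ) : ℝ) - j) * Hsym s k j + (j : ℝ) * k a * Hsym s k (j - 1)) /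
        ((s.card + 1 : ℕ) : ℝ) := by
  classical
  set N : ℕ := s.card + 1 with hN
  have hcard : (insert a s).card = N := by rw [Finset.card_insert_of_notMem h]
  have hNpos : (0 : ℝ) < (N : ℝ) := by positivity
  rcases j with _ | jj
  · -- j = 0
    rw [Hsym_zero, Hsym_zero]
    push_cast
    field_simp
    ring
  · -- j = jj + 1
    have hsum : esum (insert a s) k (jj + 1) = esum s k (jj + 1) + k a * esum s k jj :=
      esum_insert h k jj
    rw [Hsym, hcard, hsum]
    have hred : (jj + 1 : ℕ) - 1 = jj := rfl
    rw [hred]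
    rcases lt_or_ge s.card (jj + 1) with hlt | hle
    · -- jj + 1 > s.card; two subcases: jj+1 = N or jj+1 > N
      rcases eq_or_lt_of_le (Nat.succ_le_of_lt hlt) with heq | hlt2
      · -- jj + 1 = N, i.e. jj = s.card
        have hjj : jj = s.card := by omega
        subst hjj
        have h1 : esum s k (s.card + 1) = 0 := esum_of_card_lt (by omega) k
        have h2 : Hsym s k (s.card + 1) = 0 := Hsym_of_card_lt (by omega) k
        rw [h1, h2, Hsym]
        have hCN : (N.choose N : ℝ) = 1 := by simp
        have hC1 : (s.card.choose s.card : ℝ) = 1 := by simp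
        have : ((N : ℝ) - (s.card + 1 : ℕ)) = 0 := by push_cast [hN]; ring
        rw [hN] at hCN ⊢
        push_cast at this ⊢
        rw [hC1]
        simp only [Nat.choose_self, Nat.cast_one]
        field_simp
        ring
      · -- jj + 1 > N : everything vanishes
        have h1 : esum s k (jj + 1) = 0 := esum_of_card_lt (by omega) k
        have h2 : esum s k jj = 0 := esum_of_card_lt (by omega) k
        have h3 : Hsym s k (jj + 1) = 0 := Hsym_of_card_lt (by omega) k
        have h4 : Hsym s k jj = 0 := Hsym_of_card_lt (by omega) k
        rw [h1, h2, h3, h4]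
        simp
    · -- jj + 1 ≤ s.card = N - 1 : the main case
      have hCpos : 0 < N.choose (jj + 1) := Nat.choose_pos (by omega)
      have hC1pos : 0 < s.card.choose (jj + 1) := Nat.choose_pos hle
      have hC2pos : 0 < s.card.choose jj := Nat.choose_pos (by omega)
      -- identity 1 : (N - (jj+1)) * C(N, jj+1) = N * C(N-1, jj+1)
      have id1 : (N - (jj + 1)) * N.choose (jj + 1) = N * s.card.choose (jj + 1) := by
        have e1 : N.choose (jj + 2) * (jj + 2) = N.choose (jj + 1) * (N - (jj + 1)) :=
          Nat.choose_succ_right_eq N (jj + 1)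
        have e2 : N * s.card.choose (jj + 1) = N.choose (jj + 2) * (jj + 2) := by
          have := Nat.add_one_mul_choose_eq s.card (jj + 1)
          simpa [hN] using this
        rw [e2, e1]; ring
      -- identity 2 : N * C(N-1, jj) = C(N, jj+1) * (jj+1)
      have id2 : N * s.card.choose jj = N.choose (jj + 1) * (jj + 1) := by
        have := Nat.add_one_mul_choose_eq s.card jj
        simpa [hN] using this
      have id1R : ((N : ℝ) - ((jj : ℝ) + 1)) * (N.choose (jj + 1) : ℝ)
          = (N : ℝ) * (s.card.choose (jj + 1) : ℝ) := by
        have hle' : jj + 1 ≤ N := by omega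
        have : ((N - (jj + 1) : ℕ) : ℝ) = (N : ℝ) - ((jj : ℝ) + 1) := by
          push_cast [Nat.cast_sub hle']
          ring
        rw [← this]
        exact_mod_cast id1
      have id2R : (N : ℝ) * (s.card.choose jj : ℝ)
          = (N.choose (jj + 1) : ℝ) * ((jj : ℝ) + 1) := by exact_mod_cast id2
      rw [Hsym, Hsym]
      have hCne : ((N.choose (jj + 1) : ℕ) : ℝ) ≠ 0 := by positivity
      have hC1ne : ((s.card.choose (jj + 1) : ℕ) : ℝ) ≠ 0 := by exact_mod_cast hC1pos.ne' 
      have hC2ne : ((s.card.choose jj : ℕ) : ℝ) ≠ 0 := by exact_mod_cast hC2pos.ne'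
      push_cast
      field_simp
      push_cast at id1R id2R
      linear_combination (-(esum s k (jj + 1)) * (s.card.choose jj : ℝ)) * id1R +
        (k a * esum s k jj * (s.card.choose (jj + 1) : ℝ)) * id2R

lemma newton_key {a b c d t P Q : ℝ} (hb : 0 ≤ b) (hc : 0 ≤ c)
    (ht : 0 ≤ t) (hQ : 1 ≤ Q) (hPQ : Q + 1 ≤ P)
    (h1 : (Q - 1) * (a * c) ≤ (Q - 1) * b ^ 2)
    (h2 : b * d ≤ c ^ 2)
    (h3 : (Q - 1) * (a * d) ≤ (Q - 1) * (b * c)) :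
    ((P - (Q - 1)) * b + (Q - 1) * t * a) * ((P - (Q + 1)) * d + (Q + 1) * t * c) ≤
      ((P - Q) * c + Q * t * b) ^ 2 := by
  nlinarith [sq_nonneg (c - t * b),
    mul_nonneg (by nlinarith : (0:ℝ) ≤ (P - Q) ^ 2 - 1) (by linarith : (0:ℝ) ≤ c ^ 2 - b * d),
    mul_nonneg (mul_nonneg (by linarith : (0:ℝ) ≤ Q + 1) (sq_nonneg t))
      (by linarith : (0:ℝ) ≤ (Q - 1) * b ^ 2 - (Q - 1) * (a * c)),
    mul_nonneg (mul_nonneg (by linarith : (0:ℝ) ≤ P - Q - 1) ht)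
      (by linarith : (0:ℝ) ≤ (Q - 1) * (b * c) - (Q - 1) * (a * d))]

theorem newton (s : Finset ι) :
    ∀ (k : ι → ℝ), (∀ i ∈ s, 0 < k i) → ∀ m : ℕ, 1 ≤ m →
      Hsym s k (m - 1) * Hsym s k (m + 1) ≤ Hsym s k m ^ 2 := by
  classical
  induction s using Finset.induction_on with
  | empty =>
    intro k hk m hm
    have h0 : Hsym (∅ : Finset ι) k (m + 1) = 0 := Hsym_of_card_lt (by simp) k
    rw [h0, mul_zero]
    positivity
  | @insert x s ha ih =>
    intro k hk m hm
    have hks : ∀ i ∈ s, 0 < k i := fun i hi => hk i (Finset.mem_insert_of_mem hi)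
    have hkx : 0 < k x := hk x (Finset.mem_insert_self x s)
    rcases lt_or_ge s.card m with hms | hms
    · -- m + 1 > card (insert x s): top term vanishes
      have : Hsym (insert x s) k (m + 1) = 0 :=
        Hsym_of_card_lt (by rw [Finset.card_insert_of_notMem ha]; omega) k
      rw [this, mul_zero]
      positivity
    · -- main case : m ≤ s.card
      have hNpos : (0 : ℝ) < ((s.card + 1 : ℕ) : ℝ) := by positivity
      rw [Hsym_insert ha k (m - 1), Hsym_insert ha k m, Hsym_insert ha k (m + 1)]
      set aa := Hsym s k (m - 1 - 1) with haa
      set bb := Hsym s k (m - 1) with hbb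
      set cc := Hsym s k m with hcc
      set dd := Hsym s k (m + 1) with hdd
      have hm1 : (m + 1) - 1 = m := by omega
      rw [hm1]
      have hbpos : 0 < bb := Hsym_pos hks (by omega)
      have hcpos : 0 < cc := Hsym_pos hks hms
      have hdnn : 0 ≤ dd := Hsym_nonneg (fun i hi => (hks i hi).le) _
      have hann : 0 ≤ aa := Hsym_nonneg (fun i hi => (hks i hi).le) _
      have h2 : bb * dd ≤ cc ^ 2 := ih k hks m hm
      have hcast1 : (1:ℝ) ≤ (m:ℝ) := by exact_mod_cast hm
      have h1 : ((m : ℝ) - 1) * (aa * cc) ≤ ((m : ℝ) - 1) * bb ^ 2 := by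
        rcases eq_or_lt_of_le hm with hm2 | hm2
        · rw [← hm2]; norm_num
        · have := ih k hks (m - 1) (by omega)
          have hrw : m - 1 + 1 = m := by omega
          rw [hrw] at this
          exact mul_le_mul_of_nonneg_left this (by linarith)
      have h3 : ((m : ℝ) - 1) * (aa * dd) ≤ ((m : ℝ) - 1) * (bb * cc) := by
        rcases eq_or_lt_of_le hm with hm2 | hm2
        · rw [← hm2]; norm_num
        · have hac : aa * cc ≤ bb ^ 2 := by
            have := ih k hks (m - 1) (by omega)
            have hrw : m - 1 + 1 = m := by omega
            rwa [hrw] at this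
          have had : aa * dd ≤ bb * cc := by
            have hbc : 0 < bb * cc := mul_pos hbpos hcpos
            have hmul : (aa * cc) * (bb * dd) ≤ bb ^ 2 * cc ^ 2 :=
              mul_le_mul hac h2 (mul_nonneg hbpos.le hdnn) (sq_nonneg bb)
            have h4 : (aa * dd) * (bb * cc) ≤ (bb * cc) * (bb * cc) := by nlinarith [hmul]
            exact le_of_mul_le_mul_right h4 hbc
          exact mul_le_mul_of_nonneg_left had (by linarith)
      have hc1 : ((m - 1 : ℕ) : ℝ) = (m : ℝ) - 1 := by
        push_cast [Nat.cast_sub hm]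
        ring
      have key := newton_key (a := aa) (b := bb) (c := cc) (d := dd) (t := k x)
        (P := ((s.card + 1 : ℕ) : ℝ)) (Q := (m : ℝ)) hbpos.le hcpos.le hkx.le
        (by exact_mod_cast hm)
        (by have : m + 1 ≤ s.card + 1 := by omega
            exact_mod_cast this) h1 h2 h3
      rw [div_mul_div_comm, div_pow]
      rw [div_le_div_iff₀ (by positivity) (by positivity)]
      rw [hc1]
      push_cast
      push_cast at key
      nlinarith [key, sq_nonneg (((s.card:ℝ) + 1))]

theorem maclaurin (s : Finset ι) (k : ι → ℝ) (hk : ∀ i ∈ s, 0 < k i) :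
    ∀ m : ℕ, 1 ≤ m → m ≤ s.card → Hsym s k m ^ (m - 1) ≤ Hsym s k (m - 1) ^ m := by
  intro m hm1
  induction m, hm1 using Nat.le_induction with
  | base =>
    intro _
    simp [Hsym_zero]
  | succ m hm ihm =>
    intro hcard
    have hms : m ≤ s.card := by omega
    have ih := ihm hms
    set b := Hsym s k (m - 1) with hb
    set c := Hsym s k m with hc
    set d := Hsym s k (m + 1) with hd
    have hbpos : 0 < b := Hsym_pos hk (by omega)
    have hcpos : 0 < c := Hsym_pos hk hms
    have hdpos : 0 < d := Hsym_pos hk hcard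
    have hnewton : b * d ≤ c ^ 2 := newton s k hk m hm
    have hred1 : m + 1 - 1 = m := by omega
    rw [hred1]
    -- goal : d ^ m ≤ c ^ (m + 1)
    have step1 : d ^ m * c ^ (m - 1) ≤ d ^ m * b ^ m :=
      mul_le_mul_of_nonneg_left ih (pow_nonneg hdpos.le m)
    have step2 : d ^ m * b ^ m = (b * d) ^ m := by rw [← mul_pow]; ring_nf
    have step3 : (b * d) ^ m ≤ (c ^ 2) ^ m :=
      pow_le_pow_left₀ (mul_nonneg hbpos.le hdpos.le) hnewton m
    have step4 : (c ^ 2) ^ m = c ^ (m + 1) * c ^ (m - 1) := by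
      rw [← pow_mul, ← pow_add]
      congr 1
      omega
    have final : d ^ m * c ^ (m - 1) ≤ c ^ (m + 1) * c ^ (m - 1) := by
      calc d ^ m * c ^ (m - 1) ≤ d ^ m * b ^ m := step1
        _ = (b * d) ^ m := step2
        _ ≤ (c ^ 2) ^ m := step3
        _ = c ^ (m + 1) * c ^ (m - 1) := step4
    exact le_of_mul_le_mul_right final (pow_pos hcpos _)

lemma sum_erase_prod (n m : ℕ) (k : Fin n → ℝ) (hm : 1 ≤ m) (hmn : m ≤ n) :
    ∑ s ∈ Finset.powersetCard m (Finset.univ : Finset (Fin n)), ∑ i ∈ s, ∏ j ∈ s.erase i, k j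
      = ((n - m + 1 : ℕ) : ℝ) * esum (Finset.univ : Finset (Fin n)) k (m - 1) := by
  classical
  rw [Finset.sum_sigma' (Finset.powersetCard m (Finset.univ : Finset (Fin n))) (fun s => s)
    (fun s i => ∏ j ∈ s.erase i, k j)]
  rw [show ((n - m + 1 : ℕ) : ℝ) * esum (Finset.univ : Finset (Fin n)) k (m - 1)
      = ∑ t ∈ Finset.powersetCard (m - 1) (Finset.univ : Finset (Fin n)),
          ∑ _i ∈ tᶜ, ∏ j ∈ t, k j by
    rw [esum, Finset.mul_sum]
    refine Finset.sum_congr rfl fun t ht => ?_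
    rw [Finset.sum_const, nsmul_eq_mul]
    congr 1
    have hcard : t.card = m - 1 := Finset.mem_powersetCard_univ.1 ht
    rw [Finset.card_compl, hcard]
    congr 1
    simp only [Fintype.card_fin]
    omega]
  rw [Finset.sum_sigma' (Finset.powersetCard (m - 1) (Finset.univ : Finset (Fin n)))
    (fun t => tᶜ) (fun t _i => ∏ j ∈ t, k j)]
  refine Finset.sum_nbij' (fun x => ⟨x.1.erase x.2, x.2⟩) (fun y => ⟨insert y.2 y.1, y.2⟩)
    ?_ ?_ ?_ ?_ ?_
  · rintro ⟨s, i⟩ hsi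
    rw [Finset.mem_sigma] at hsi ⊢
    obtain ⟨hs, hi⟩ := hsi
    constructor
    · rw [Finset.mem_powersetCard_univ]
      rw [Finset.card_erase_of_mem hi, Finset.mem_powersetCard_univ.1 hs]
    · simp
  · rintro ⟨t, i⟩ hti
    rw [Finset.mem_sigma] at hti ⊢
    obtain ⟨ht, hi⟩ := hti
    have hit : i ∉ t := by simpa using hi
    constructor
    · rw [Finset.mem_powersetCard_univ, Finset.card_insert_of_notMem hit,
        Finset.mem_powersetCard_univ.1 ht]
      omega
    · exact Finset.mem_insert_self _ _
  · rintro ⟨s, i⟩ hsi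
    rw [Finset.mem_sigma] at hsi
    simp only [Sigma.mk.inj_iff, heq_eq_eq]
    exact ⟨Finset.insert_erase hsi.2, trivial⟩
  · rintro ⟨t, i⟩ hti
    rw [Finset.mem_sigma] at hti
    have hit : i ∉ t := by simpa using hti.2
    simp only [Sigma.mk.inj_iff, heq_eq_eq]
    exact ⟨Finset.erase_insert hit, trivial⟩
  · rintro ⟨s, i⟩ _
    rfl

/-- The normalized `m`-th elementary symmetric polynomial (the `m`-th mean curvature). -/
noncomputable def Hm (n m : ℕ) (k : Fin n → ℝ) : ℝ :=
  ((Nat.factorial m * Nat.factorial (n - m) : ℕ) : ℝ) / (Nat.factorial n : ℝ) *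
    ∑ s ∈ Finset.powersetCard m Finset.univ, ∏ i ∈ s, k i

lemma Hm_eq_Hsym (n m : ℕ) (hmn : m ≤ n) (k : Fin n → ℝ) :
    Hm n m k = Hsym (Finset.univ : Finset (Fin n)) k m := by
  have hchoose := Nat.choose_mul_factorial_mul_factorial hmn
  have hcpos : 0 < n.choose m := Nat.choose_pos hmn
  have h1 : ((m.factorial * (n - m).factorial : ℕ) : ℝ) / (n.factorial : ℝ)
      = 1 / (n.choose m : ℝ) := by
    rw [div_eq_div_iff (by positivity) (by exact_mod_cast hcpos.ne')]
    have : m.factorial * (n - m).factorial * n.choose m = n.factorial := by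
      rw [← hchoose]; ring
    push_cast [← this]
    ring
  rw [Hm, Hsym, h1, Finset.card_univ, Fintype.card_fin, esum, one_div, inv_mul_eq_div]

/-- Let `σ(k) = H_m(k)^β` with `β > 1/m`.  Then for every `k` in the open positive cone,
`Σ_i ∂σ/∂k_i(k) ≥ mβ · σ(k)^(1 - 1/(mβ))`. -/
theorem stmt2 (n m : ℕ) (β : ℝ) (hn : 2 ≤ n) (hm1 : 1 ≤ m) (hmn : m ≤ n)
    (hβ : 1 / (m : ℝ) < β) (k : Fin n → ℝ) (hk : ∀ i, 0 < k i) :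
    (m : ℝ) * β * (Hm n m k ^ β) ^ (1 - 1 / ((m : ℝ) * β)) ≤
      ∑ i, fderiv ℝ (fun k => Hm n m k ^ β) k (Pi.single i 1) := by
  classical
  have hku : ∀ i ∈ (Finset.univ : Finset (Fin n)), 0 < k i := fun i _ => hk i
  have hcard : (Finset.univ : Finset (Fin n)).card = n := by
    rw [Finset.card_univ, Fintype.card_fin]
  have hmr : (1 : ℝ) ≤ (m : ℝ) := by exact_mod_cast hm1
  have hmr0 : (0 : ℝ) < (m : ℝ) := by linarith
  have hβ0 : 0 < β := lt_trans (by positivity) hβ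
  set H := Hm n m k with hHdef
  have hHs : H = Hsym (Finset.univ : Finset (Fin n)) k m := Hm_eq_Hsym n m hmn k
  have hHpos : 0 < H := by
    rw [hHs]; exact Hsym_pos hku (by rw [hcard]; exact hmn)
  set G := Hsym (Finset.univ : Finset (Fin n)) k (m - 1) with hGdef
  have hGpos : 0 < G := Hsym_pos hku (by rw [hcard]; omega)
  set Cc : ℝ := ((Nat.factorial m * Nat.factorial (n - m) : ℕ) : ℝ) / (Nat.factorial n : ℝ)
    with hCc
  set P := Finset.powersetCard m (Finset.univ : Finset (Fin n)) with hP
  set D : (Fin n → ℝ) →L[ℝ] ℝ :=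
    ∑ s ∈ P, ∑ i ∈ s, (∏ j ∈ s.erase i, k j) •
      (ContinuousLinearMap.proj (R := ℝ) (φ := fun _ : Fin n => ℝ) i) with hD
  have hE : HasFDerivAt (fun k' : Fin n → ℝ => ∑ s ∈ P, ∏ i ∈ s, k' i) D k := by
    rw [hD]
    exact HasFDerivAt.fun_sum fun s _ => HasFDerivAt.finset_prod fun i _ =>
      (ContinuousLinearMap.proj (R := ℝ) (φ := fun _ : Fin n => ℝ) i).hasFDerivAt
  have hHm : HasFDerivAt (fun k' : Fin n → ℝ => Hm n m k') (Cc • D) k := by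
    simp only [Hm]
    exact hE.const_mul Cc
  have hσ : HasFDerivAt (fun k' : Fin n → ℝ => Hm n m k' ^ β)
      ((β * Hm n m k ^ (β - 1)) • (Cc • D)) k := hHm.rpow_const (Or.inl hHpos.ne')
  rw [hσ.fderiv]
  -- compute the sum of the derivative applied to the basis vectors
  have h1v : (∑ i, Pi.single i (1:ℝ)) = (fun _ : Fin n => (1:ℝ)) := by
    ext j
    simp [Finset.sum_apply, Pi.single_apply]
  have hsum : ∑ i, ((β * Hm n m k ^ (β - 1)) • (Cc • D)) (Pi.single i 1)
      = β * H ^ (β - 1) * (Cc * D (fun _ => (1:ℝ))) := by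
    rw [← map_sum ((β * Hm n m k ^ (β - 1)) • (Cc • D)) (fun i => Pi.single i (1:ℝ))
      Finset.univ, h1v]
    simp [smul_eq_mul, mul_assoc]
    exact Or.inl (Or.inl rfl)
  rw [hsum]
  have hD1 : D (fun _ => (1:ℝ)) = ((n - m + 1 : ℕ) : ℝ)
      * esum (Finset.univ : Finset (Fin n)) k (m - 1) := by
    rw [hD]
    simp only [ContinuousLinearMap.sum_apply, ContinuousLinearMap.smul_apply,
      ContinuousLinearMap.proj_apply, smul_eq_mul, mul_one]
    exact sum_erase_prod n m k hm1 hmn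
  rw [hD1]
  -- rewrite the coefficient : Cc * ((n-m+1) * esum) = m * G
  have hid : Cc * (((n - m + 1 : ℕ) : ℝ) * esum (Finset.univ : Finset (Fin n)) k (m - 1))
      = (m : ℝ) * G := by
    have hidN : n.choose m * m = n.choose (m - 1) * (n - m + 1) := by
      have := Nat.choose_succ_right_eq n (m - 1)
      have hm' : m - 1 + 1 = m := by omega
      rw [hm'] at this
      have hsub : n - (m - 1) = n - m + 1 := by omega
      rw [hsub] at this
      exact this
    have hCpos : 0 < n.choose m := Nat.choose_pos hmn
    have hC1pos : 0 < n.choose (m - 1) := Nat.choose_pos (by omega)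
    have hCcEq : Cc = 1 / (n.choose m : ℝ) := by
      rw [hCc, div_eq_div_iff (by positivity) (by exact_mod_cast hCpos.ne')]
      have h2 : m.factorial * (n - m).factorial * n.choose m = n.factorial := by
        rw [← Nat.choose_mul_factorial_mul_factorial hmn]; ring
      push_cast [← h2]
      ring
    rw [hCcEq, hGdef, Hsym, hcard]
    have hCne : ((n.choose m : ℕ) : ℝ) ≠ 0 := by exact_mod_cast hCpos.ne'
    have hC1ne : ((n.choose (m - 1) : ℕ) : ℝ) ≠ 0 := by exact_mod_cast hC1pos.ne'
    have hidR : ((n.choose m : ℕ) : ℝ) * (m : ℝ)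
        = ((n.choose (m - 1) : ℕ) : ℝ) * ((n - m + 1 : ℕ) : ℝ) := by exact_mod_cast hidN
    rw [one_div, inv_mul_eq_div, mul_div_assoc', div_eq_div_iff hCne hC1ne]
    linear_combination (-(esum (Finset.univ : Finset (Fin n)) k (m - 1))) * hidR
  rw [hid]
  -- now pure real arithmetic with Maclaurin's inequality
  have hmac : H ^ (m - 1) ≤ G ^ m := by
    rw [hHs, hGdef]
    exact maclaurin Finset.univ k hku m hm1 (by rw [hcard]; exact hmn)
  have hkey : H ^ (1 - 1 / (m : ℝ)) ≤ G := by
    have hcast : ((m - 1 : ℕ) : ℝ) = (m : ℝ) - 1 := by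
      push_cast [Nat.cast_sub hm1]; ring
    have h5 : (H ^ ((m - 1 : ℕ) : ℝ)) ^ ((m : ℝ)⁻¹) ≤ (G ^ ((m : ℕ) : ℝ)) ^ ((m : ℝ)⁻¹) := by
      apply Real.rpow_le_rpow (by positivity) _ (by positivity)
      rw [Real.rpow_natCast, Real.rpow_natCast]
      exact hmac
    rw [← Real.rpow_natCast H (m - 1), ← Real.rpow_natCast G m] at hmac
    have h6 : (H ^ ((m - 1 : ℕ) : ℝ)) ^ ((m : ℝ)⁻¹) = H ^ (1 - 1 / (m : ℝ)) := by
      rw [← Real.rpow_mul hHpos.le]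
      congr 1
      rw [hcast]
      field_simp
    have h7 : (G ^ ((m : ℕ) : ℝ)) ^ ((m : ℝ)⁻¹) = G := by
      rw [← Real.rpow_mul hGpos.le]
      rw [mul_inv_cancel₀ (by positivity : ((m : ℕ) : ℝ) ≠ 0)]
      exact Real.rpow_one G
    rw [h6, h7] at h5
    exact h5
  -- LHS exponent manipulation
  have hexp : (H ^ β) ^ (1 - 1 / ((m : ℝ) * β)) = H ^ (β - 1) * H ^ (1 - 1 / (m : ℝ)) := by
    rw [← Real.rpow_mul hHpos.le, ← Real.rpow_add hHpos]
    congr 1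
    field_simp
    ring
  rw [hexp]
  have hpos : (0 : ℝ) < β * H ^ (β - 1) := by positivity
  nlinarith [mul_le_mul_of_nonneg_left hkey (le_of_lt (by positivity :
    (0:ℝ) < (m : ℝ) * (β * H ^ (β - 1))))]
end
end

section
/- For every integer n ≥ 2 and every ε > 0 there exists δ = δ(ε,n) > 0 with the following property: if k = (k_1,…,k_n) ∈ ℝ^n satisfies min_i k_i ≥ ε·H(k) and H(k) > 0, then (n·Σ_i k_i² − H(k)²)/H(k)² ≥ δ·(1/nⁿ − K(k)/H(k)ⁿ). -/
-- pointwise log bound: for 0 < a ≤ u, (u-1) - (u-1)^2/a ≤ log u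
lemma aux_log (a u : ℝ) (ha : 0 < a) (hau : a ≤ u) :
    (u - 1) - (u - 1)^2 / a ≤ Real.log u := by
  have hu : 0 < u := lt_of_lt_of_le ha hau
  have h1 : 1 - u⁻¹ ≤ Real.log u := by
    have := Real.log_le_sub_one_of_pos (show (0:ℝ) < u⁻¹ by positivity)
    rw [Real.log_inv] at this
    linarith
  have h2 : (u-1)^2 / u ≤ (u-1)^2 / a := by
    apply div_le_div_of_nonneg_left (by positivity) ha hau
  have h3 : (u - 1) - (u-1)^2 / u = 1 - u⁻¹ := by
    field_simp; ring
  linarith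

lemma aux_core (n : ℕ) (hn : 2 ≤ n) (ε : ℝ) (hε : 0 < ε) (x : Fin n → ℝ)
    (hx1 : ∑ i, x i = 1) (hxε : ∀ i, ε ≤ x i) :
    ε * (1 / (n : ℝ) ^ n - ∏ i, x i) ≤ (n : ℝ) * (∑ i, (x i)^2) - 1 := by
  have hn0 : (0:ℝ) < n := by positivity
  set a : ℝ := n * ε with hadef
  have ha : 0 < a := by positivity
  set T : ℝ := ∑ i, (x i)^2 with hTdef
  set S : ℝ := ∑ i, ((n : ℝ) * x i - 1)^2 with hSdef
  set P : ℝ := ∏ i, x i with hPdef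
  have hxpos : ∀ i, 0 < x i := fun i => lt_of_lt_of_le hε (hxε i)
  -- sum of logs lower bound
  have hlog : ∀ i ∈ Finset.univ, ((n:ℝ) * x i - 1) - ((n:ℝ) * x i - 1)^2 / a
      ≤ Real.log ((n:ℝ) * x i) := by
    intro i _
    exact aux_log a ((n:ℝ) * x i) ha (by
      have := hxε i; nlinarith)
  have hsum : -(S / a) ≤ ∑ i, Real.log ((n:ℝ) * x i) := by
    have := Finset.sum_le_sum hlog
    have hL : ∑ i, (((n:ℝ) * x i - 1) - ((n:ℝ) * x i - 1)^2 / a) = -(S/a) := by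
      rw [Finset.sum_sub_distrib]
      have e1 : ∑ i, ((n:ℝ) * x i - 1) = 0 := by
        rw [Finset.sum_sub_distrib, ← Finset.mul_sum, hx1]
        simp
      have e2 : ∑ i, ((n:ℝ) * x i - 1)^2 / a = S / a := by
        rw [← Finset.sum_div]
      rw [e1, e2]; ring
    linarith [hL ▸ this]
  -- product lower bound
  have hexp : Real.exp (∑ i, Real.log ((n:ℝ) * x i)) = ∏ i, ((n:ℝ) * x i) := by
    rw [Real.exp_sum]
    exact Finset.prod_congr rfl fun i _ => Real.exp_log (mul_pos hn0 (hxpos i))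
  have hNP : ∏ i, ((n:ℝ) * x i) = (n:ℝ)^n * P := by
    rw [Finset.prod_mul_distrib, Finset.prod_const, Finset.card_univ, Fintype.card_fin]
  have h1 : 1 - S / a ≤ (n:ℝ)^n * P := by
    have := Real.add_one_le_exp (-(S/a))
    have h2 := Real.exp_le_exp.2 hsum
    rw [hexp, hNP] at h2
    linarith
  -- S identity
  have hS : S = (n:ℝ)^2 * T - n := by
    have : S = ∑ i, ((n:ℝ)^2 * (x i)^2 - 2 * n * x i + 1) :=
      Finset.sum_congr rfl fun i _ => by ring
    rw [this, Finset.sum_add_distrib, Finset.sum_sub_distrib, ← Finset.mul_sum,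
      ← Finset.mul_sum, hx1, hTdef, Finset.sum_const, Finset.card_univ, Fintype.card_fin]
    simp; ring
  have hS0 : 0 ≤ S := Finset.sum_nonneg fun i _ => sq_nonneg _
  have hT1 : 1 ≤ (n:ℝ) * T := by nlinarith
  -- from h1 : ε * (1 - n^n P) ≤ n*T - 1
  have h2 : ε * (1 - (n:ℝ)^n * P) ≤ (n:ℝ) * T - 1 := by
    have := (le_div_iff₀ ha).1 (by linarith [h1] : 1 - (n:ℝ)^n * P ≤ S / a)
    nlinarith
  have hN1 : (1:ℝ) ≤ (n:ℝ)^n := one_le_pow₀ (by exact_mod_cast Nat.one_le_of_lt hn)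
  have hNpos : (0:ℝ) < (n:ℝ)^n := by positivity
  have hgoal : ε * (1 / (n:ℝ)^n - P) = ε * (1 - (n:ℝ)^n * P) / (n:ℝ)^n := by
    field_simp
  rw [hgoal, div_le_iff₀ hNpos]
  nlinarith


/-- Schulze's algebraic lemma: for every integer `n ≥ 2` and `ε > 0` there exists
`δ = δ(ε,n) > 0` such that whenever `k ∈ ℝ^n` satisfies `min_i k_i ≥ ε·H(k)` and
`H(k) > 0` (with `H(k) = Σ_i k_i`, `K(k) = Π_i k_i`), one has
`(n·Σ_i k_i² − H²)/H² ≥ δ·(1/nⁿ − K/Hⁿ)`. -/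
theorem stmt4 (n : ℕ) (hn : 2 ≤ n) (ε : ℝ) (hε : 0 < ε) :
    ∃ δ > (0 : ℝ), ∀ k : Fin n → ℝ,
      (∀ i, ε * (∑ j, k j) ≤ k i) → 0 < ∑ j, k j →
      δ * (1 / (n : ℝ) ^ n - (∏ i, k i) / (∑ i, k i) ^ n) ≤
        ((n : ℝ) * ∑ i, (k i) ^ 2 - (∑ i, k i) ^ 2) / (∑ i, k i) ^ 2 := by
  refine ⟨ε, hε, ?_⟩
  intro k hk hH
  set H : ℝ := ∑ j, k j with hHdef
  have hH0 : H ≠ 0 := ne_of_gt hH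
  set x : Fin n → ℝ := fun i => k i / H with hxdef
  have hx1 : ∑ i, x i = 1 := by
    simp only [hxdef, ← Finset.sum_div]
    field_simp
    exact hHdef.symm
  have hxε : ∀ i, ε ≤ x i := fun i => (le_div_iff₀ hH).2 (hk i)
  have hcore := aux_core n hn ε hε x hx1 hxε
  have hprod : ∏ i, k i = (∏ i, x i) * H ^ n := by
    have h : (∏ i, x i) * H ^ n = ∏ i, (x i * H) := by
      rw [Finset.prod_mul_distrib, Finset.prod_const, Finset.card_univ, Fintype.card_fin]
    rw [h]
    refine Finset.prod_congr rfl fun i _ => ?_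
    field_simp [hxdef]
    exact (div_mul_cancel₀ (k i) hH0).symm
  have hsq : ∑ i, (k i)^2 = (∑ i, (x i)^2) * H^2 := by
    rw [Finset.sum_mul]
    refine Finset.sum_congr rfl fun i _ => ?_
    field_simp [hxdef]
    rw [← mul_pow]
    exact congrArg (· ^ 2) (div_mul_cancel₀ (k i) hH0).symm
  rw [hprod, hsq]
  have e1 : (∏ i, x i) * H ^ n / H ^ n = ∏ i, x i := by
    field_simp
  have e2 : ((n:ℝ) * ((∑ i, (x i)^2) * H^2) - H^2) / H^2
      = (n:ℝ) * (∑ i, (x i)^2) - 1 := by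
    field_simp
  rw [e1, e2]
  exact hcore
end

section
/- Let n ≥ 2, let ε > 0, let A be a real symmetric n×n matrix with tr A > 0 such that A − ε·(tr A)·I is positive semidefinite, and let T : {1,…,n}³ → ℝ be totally symmetric (invariant under all permutations of its three indices). Set H = tr A and U_i = Σ_p T_{ipp}. Then ε ≤ 1/n and Σ_{i,j,l} (H·T_{ijl} − A_{jl}·U_i)² ≥ ((n−1)/2)·ε²·H²·Σ_{i,j,l} T_{ijl}². -/
open Finset Matrix

set_option maxHeartbeats 1600000

namespace Stmt5Aux

variable {n : ℕ}

lemma tswap12 (f : Fin n → Fin n → Fin n → ℝ) :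
    ∑ a, ∑ b, ∑ c, f a b c = ∑ b, ∑ a, ∑ c, f a b c := Finset.sum_comm

lemma tswap23 (f : Fin n → Fin n → Fin n → ℝ) :
    ∑ a, ∑ b, ∑ c, f a b c = ∑ a, ∑ c, ∑ b, f a b c :=
  Finset.sum_congr rfl fun a _ => Finset.sum_comm

variable (O : Matrix (Fin n) (Fin n) ℝ)

lemma rot1_sq (hOrow : ∀ i i', (∑ a, O i a * O i' a) = if i = i' then 1 else 0)
    (v : Fin n → ℝ) :
    ∑ a, (∑ i, v i * O i a) ^ 2 = ∑ i, (v i) ^ 2 := by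
  have h1 : ∀ a : Fin n, (∑ i, v i * O i a) ^ 2
      = ∑ i, ∑ i', (v i * v i') * (O i a * O i' a) := by
    intro a
    rw [sq, Finset.sum_mul_sum]
    exact Finset.sum_congr rfl fun i _ => Finset.sum_congr rfl fun i' _ => by ring
  rw [Finset.sum_congr rfl fun a _ => h1 a, Finset.sum_comm]
  have h2 : ∀ i : Fin n, (∑ a, ∑ i', (v i * v i') * (O i a * O i' a)) = (v i) ^ 2 := by
    intro i
    rw [Finset.sum_comm]
    have h3 : ∀ i' : Fin n, (∑ a, (v i * v i') * (O i a * O i' a))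
        = (v i * v i') * (if i = i' then 1 else 0) := by
      intro i'
      rw [← Finset.mul_sum, hOrow]
    rw [Finset.sum_congr rfl fun i' _ => h3 i']
    simp [Finset.sum_ite_eq, sq]
  exact Finset.sum_congr rfl fun i _ => h2 i

lemma rot3_sq (hOrow : ∀ i i', (∑ a, O i a * O i' a) = if i = i' then 1 else 0)
    (R : Fin n → Fin n → Fin n → ℝ) :
    ∑ a, ∑ b, ∑ c, (∑ i, ∑ j, ∑ l, R i j l * O i a * O j b * O l c) ^ 2
      = ∑ i, ∑ j, ∑ l, (R i j l) ^ 2 := by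
  have hfact : ∀ a b c, (∑ i, ∑ j, ∑ l, R i j l * O i a * O j b * O l c)
      = ∑ i, (∑ j, (∑ l, R i j l * O l c) * O j b) * O i a := by
    intro a b c
    refine Finset.sum_congr rfl fun i _ => ?_
    rw [Finset.sum_mul]
    refine Finset.sum_congr rfl fun j _ => ?_
    rw [Finset.sum_mul, Finset.sum_mul]
    exact Finset.sum_congr rfl fun l _ => by ring
  calc ∑ a, ∑ b, ∑ c, (∑ i, ∑ j, ∑ l, R i j l * O i a * O j b * O l c) ^ 2
      = ∑ a, ∑ b, ∑ c, (∑ i, (∑ j, (∑ l, R i j l * O l c) * O j b) * O i a) ^ 2 :=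
        Finset.sum_congr rfl fun a _ => Finset.sum_congr rfl fun b _ =>
          Finset.sum_congr rfl fun c _ => by rw [hfact a b c]
    _ = ∑ b, ∑ a, ∑ c, (∑ i, (∑ j, (∑ l, R i j l * O l c) * O j b) * O i a) ^ 2 :=
        tswap12 _
    _ = ∑ b, ∑ c, ∑ a, (∑ i, (∑ j, (∑ l, R i j l * O l c) * O j b) * O i a) ^ 2 :=
        tswap23 _
    _ = ∑ b, ∑ c, ∑ i, (∑ j, (∑ l, R i j l * O l c) * O j b) ^ 2 :=
        Finset.sum_congr rfl fun b _ => Finset.sum_congr rfl fun c _ =>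
          rot1_sq O hOrow _
    _ = ∑ b, ∑ i, ∑ c, (∑ j, (∑ l, R i j l * O l c) * O j b) ^ 2 :=
        tswap23 _
    _ = ∑ i, ∑ b, ∑ c, (∑ j, (∑ l, R i j l * O l c) * O j b) ^ 2 :=
        tswap12 _
    _ = ∑ i, ∑ c, ∑ b, (∑ j, (∑ l, R i j l * O l c) * O j b) ^ 2 :=
        tswap23 _
    _ = ∑ i, ∑ c, ∑ j, (∑ l, R i j l * O l c) ^ 2 :=
        Finset.sum_congr rfl fun i _ => Finset.sum_congr rfl fun c _ =>
          rot1_sq O hOrow _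
    _ = ∑ i, ∑ j, ∑ c, (∑ l, R i j l * O l c) ^ 2 := tswap23 _
    _ = ∑ i, ∑ j, ∑ l, (R i j l) ^ 2 :=
        Finset.sum_congr rfl fun i _ => Finset.sum_congr rfl fun j _ =>
          rot1_sq O hOrow _

lemma rot_symm12 (R : Fin n → Fin n → Fin n → ℝ)
    (h : ∀ i j l, R i j l = R j i l) (a b c : Fin n) :
    (∑ i, ∑ j, ∑ l, R i j l * O i a * O j b * O l c)
      = ∑ i, ∑ j, ∑ l, R i j l * O i b * O j a * O l c := by
  rw [Finset.sum_comm]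
  refine Finset.sum_congr rfl fun i _ => Finset.sum_congr rfl fun j _ =>
    Finset.sum_congr rfl fun l _ => ?_
  rw [h j i l]; ring

lemma rot_symm23 (R : Fin n → Fin n → Fin n → ℝ)
    (h : ∀ i j l, R i j l = R i l j) (a b c : Fin n) :
    (∑ i, ∑ j, ∑ l, R i j l * O i a * O j b * O l c)
      = ∑ i, ∑ j, ∑ l, R i j l * O i a * O j c * O l b := by
  refine Finset.sum_congr rfl fun i _ => ?_
  rw [Finset.sum_comm]
  refine Finset.sum_congr rfl fun j _ => Finset.sum_congr rfl fun l _ => ?_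
  rw [h i l j]; ring

lemma rot_trace (hOrow : ∀ i i', (∑ a, O i a * O i' a) = if i = i' then 1 else 0)
    (R : Fin n → Fin n → Fin n → ℝ) (a : Fin n) :
    (∑ b, ∑ i, ∑ j, ∑ l, R i j l * O i a * O j b * O l b)
      = ∑ i, (∑ p, R i p p) * O i a := by
  rw [Finset.sum_comm]
  refine Finset.sum_congr rfl fun i _ => ?_
  rw [Finset.sum_comm]
  have h1 : ∀ j, (∑ b, ∑ l, R i j l * O i a * O j b * O l b)
      = ∑ l, R i j l * O i a * (if j = l then 1 else 0) := by
    intro j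
    rw [Finset.sum_comm]
    refine Finset.sum_congr rfl fun l _ => ?_
    rw [← hOrow j l, Finset.mul_sum]
    exact Finset.sum_congr rfl fun b _ => by ring
  rw [Finset.sum_congr rfl fun j _ => h1 j, Finset.sum_mul]
  refine Finset.sum_congr rfl fun j _ => ?_
  simp [Finset.sum_ite_eq]


lemma claim1 (n : ℕ) (hn : 2 ≤ n) (ε H : ℝ) (hε : 0 < ε) (hH : 0 < H)
    (hnε : (n : ℝ) * ε ≤ 1) (lam : Fin n → ℝ) (hlam : ∀ b, ε * H ≤ lam b)
    (hsum : ∑ b, lam b = H) (x : Fin n → ℝ) (a : Fin n) :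
    ((n : ℝ) - 1) / 2 * ε ^ 2 * H ^ 2 * (x a) ^ 2 ≤
      (∑ b, (H * x b - lam b * (∑ p, x p)) ^ 2) + H ^ 2 * ((∑ b, (x b) ^ 2) - (x a) ^ 2) := by
  have hm : (2 : ℝ) ≤ (n : ℝ) := by exact_mod_cast hn
  set u := ∑ p, x p with hu
  set w := ∑ b, lam b * x b with hw
  set S2 := ∑ b, (x b) ^ 2 with hS2
  set L2full := ∑ b, (lam b) ^ 2 with hL2full
  set xa := x a with hxa
  set la := lam a with hla
  set B2 := S2 - xa ^ 2 with hB2def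
  set L2 := L2full - la ^ 2 with hL2def
  set wp := w - la * xa with hwp
  set D := ∑ b, (H * x b - lam b * u) ^ 2 with hD
  clear_value u w S2 L2full xa la B2 L2 wp D
  -- expansion of D
  have hDexp : D = H ^ 2 * S2 - 2 * H * u * w + L2full * u ^ 2 := by
    have h1 : ∀ b : Fin n, (H * x b - lam b * u) ^ 2
        = H ^ 2 * (x b) ^ 2 - 2 * H * u * (lam b * x b) + u ^ 2 * (lam b) ^ 2 := by
      intro b; ring
    rw [hD]
    rw [Finset.sum_congr rfl fun b _ => h1 b]
    rw [Finset.sum_add_distrib, Finset.sum_sub_distrib, ← Finset.mul_sum, ← Finset.mul_sum,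
      ← Finset.mul_sum, ← hw, ← hS2, ← hL2full]
    ring
  -- erase identities
  have hmema : a ∈ (Finset.univ : Finset (Fin n)) := Finset.mem_univ a
  have hwp_sum : wp = ∑ b ∈ Finset.univ.erase a, lam b * x b := by
    rw [hwp, hw, hla, hxa, ← Finset.add_sum_erase _ _ hmema]; ring
  have hB2_sum : B2 = ∑ b ∈ Finset.univ.erase a, (x b) ^ 2 := by
    rw [hB2def, hS2, hxa, ← Finset.add_sum_erase _ _ hmema]; ring
  have hL2_sum : L2 = ∑ b ∈ Finset.univ.erase a, (lam b) ^ 2 := by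
    rw [hL2def, hL2full, hla, ← Finset.add_sum_erase _ _ hmema]; ring
  have hB2 : 0 ≤ B2 := by
    rw [hB2_sum]; exact Finset.sum_nonneg fun b _ => sq_nonneg _
  have hL2 : 0 ≤ L2 := by
    rw [hL2_sum]; exact Finset.sum_nonneg fun b _ => sq_nonneg _
  have hwpCS : wp ^ 2 ≤ L2 * B2 := by
    rw [hwp_sum, hL2_sum, hB2_sum]
    exact Finset.sum_mul_sq_le_sq_mul_sq _ _ _
  have hcard : ((Finset.univ.erase a).card : ℝ) = (n : ℝ) - 1 := by
    rw [Finset.card_erase_of_mem hmema]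
    simp [Finset.card_univ]
    have h1n : 1 ≤ n := le_trans one_le_two hn
    push_cast [Nat.cast_sub h1n]
    ring
  have hεH : 0 < ε * H := mul_pos hε hH
  have hlampos : ∀ b, 0 < lam b := fun b => lt_of_lt_of_le hεH (hlam b)
  -- lower bound on L2
  have hL2lb : ((n : ℝ) - 1) * (ε * H) ^ 2 ≤ L2 := by
    rw [hL2_sum, ← hcard]
    have h2 : ∀ b ∈ Finset.univ.erase a, (ε * H) ^ 2 ≤ (lam b) ^ 2 := fun b _ =>
      pow_le_pow_left₀ hεH.le (hlam b) 2
    calc ((Finset.univ.erase a).card : ℝ) * (ε * H) ^ 2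
        = ∑ _b ∈ Finset.univ.erase a, (ε * H) ^ 2 := by rw [Finset.sum_const, nsmul_eq_mul]
      _ ≤ ∑ b ∈ Finset.univ.erase a, (lam b) ^ 2 := Finset.sum_le_sum h2
  -- upper bound on la
  have hlaub : la ≤ (1 - ((n : ℝ) - 1) * ε) * H := by
    have hrest : ((n : ℝ) - 1) * (ε * H) ≤ ∑ b ∈ Finset.univ.erase a, lam b := by
      rw [← hcard]
      calc ((Finset.univ.erase a).card : ℝ) * (ε * H)
          = ∑ _b ∈ Finset.univ.erase a, (ε * H) := by rw [Finset.sum_const, nsmul_eq_mul]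
        _ ≤ _ := Finset.sum_le_sum fun b _ => hlam b
    have hsplit : la + ∑ b ∈ Finset.univ.erase a, lam b = H := by
      rw [hla, Finset.add_sum_erase _ _ hmema, hsum]
    linarith only [hrest, hsplit]
  have hla_pos : 0 < la := by rw [hla]; exact hlampos a
  have hL2full_pos : 0 < L2full := by
    have h3 : la ^ 2 ≤ L2full := by
      rw [hL2full, hla]
      exact Finset.single_le_sum (fun b _ => sq_nonneg (lam b)) hmema
    exact lt_of_lt_of_le (pow_pos hla_pos 2) h3
  -- key2 : w^2 ≤ (la^2 + L2/2)*(xa^2 + 2*B2)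
  have hweq : w = la * xa + wp := by rw [hwp]; ring
  have key2 : w ^ 2 ≤ (la ^ 2 + L2 / 2) * (xa ^ 2 + 2 * B2) := by
    have hcert : 2 * L2 * ((la ^ 2 + L2 / 2) * (xa ^ 2 + 2 * B2) - (la * xa + wp) ^ 2)
        = (2 * la * wp - L2 * xa) ^ 2 + 2 * L2 * (L2 * B2 - wp ^ 2)
          + 4 * la ^ 2 * (L2 * B2 - wp ^ 2) := by ring
    rcases eq_or_lt_of_le hL2 with hL0 | hL0
    · have hwple : wp ^ 2 ≤ 0 := by
        have h4 := hwpCS; rw [← hL0] at h4; simpa using h4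
      have hwp0 : wp = 0 := by
        have h0 : wp ^ 2 = 0 := le_antisymm hwple (sq_nonneg wp)
        exact (pow_eq_zero_iff two_ne_zero).mp h0
      have hwla : w = la * xa := by rw [hweq, hwp0]; ring
      rw [hwla, ← hL0]
      linarith only [mul_nonneg (sq_nonneg la) hB2]
    · have h2L2 : (0:ℝ) < 2 * L2 := by linarith only [hL0]
      have hnn : 0 ≤ 2 * L2 * ((la ^ 2 + L2 / 2) * (xa ^ 2 + 2 * B2) - (la * xa + wp) ^ 2) := by
        rw [hcert]
        have h1 : 0 ≤ L2 * B2 - wp ^ 2 := sub_nonneg.2 hwpCS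
        positivity
      have h3 := (mul_nonneg_iff_of_pos_left h2L2).mp hnn
      rw [hweq]
      exact sub_nonneg.mp h3
  -- key3 : ((n:ℝ)-1) * ε^2 * L2full ≤ L2
  have h1e : 0 ≤ 1 - ((n : ℝ) - 1) * ε := by nlinarith [hε.le, hnε]
  have hla2ub : la ^ 2 ≤ ((1 - ((n : ℝ) - 1) * ε) * H) ^ 2 :=
    pow_le_pow_left₀ hla_pos.le hlaub 2
  have hcoe : (0:ℝ) ≤ ((n : ℝ) - 1) * ε ^ 2 :=
    mul_nonneg (by linarith only [hm]) (sq_nonneg ε)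
  have key3 : ((n : ℝ) - 1) * ε ^ 2 * L2full ≤ L2 := by
    have hL2fsplit0 : L2full = la ^ 2 + L2 := by rw [hL2def]; ring
    have p1 : ((n : ℝ) - 1) * ε ^ 2 * la ^ 2
        ≤ ((n : ℝ) - 1) * ε ^ 2 * ((1 - ((n : ℝ) - 1) * ε) * H) ^ 2 :=
      mul_le_mul_of_nonneg_left hla2ub hcoe
    have p2id : (1 - ((n : ℝ) - 1) * ε ^ 2) * H ^ 2 - ((1 - ((n : ℝ) - 1) * ε) * H) ^ 2
        = (((n : ℝ) - 1) * ε) * ((2 - (n : ℝ) * ε) * H ^ 2) := by ring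
    have p2pos : 0 ≤ (((n : ℝ) - 1) * ε) * ((2 - (n : ℝ) * ε) * H ^ 2) := by
      have h2 : (0:ℝ) ≤ 2 - (n : ℝ) * ε := by linarith only [hnε]
      have h3 : (0:ℝ) ≤ ((n : ℝ) - 1) * ε :=
        mul_nonneg (by linarith only [hm]) hε.le
      have h4 : (0:ℝ) ≤ (2 - (n : ℝ) * ε) * H ^ 2 := mul_nonneg h2 (sq_nonneg H)
      exact mul_nonneg h3 h4
    have p2 : ((1 - ((n : ℝ) - 1) * ε) * H) ^ 2 ≤ (1 - ((n : ℝ) - 1) * ε ^ 2) * H ^ 2 := by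
      linarith only [p2id, p2pos]
    have p3 : ((n : ℝ) - 1) * ε ^ 2 * ((1 - ((n : ℝ) - 1) * ε) * H) ^ 2
        ≤ ((n : ℝ) - 1) * ε ^ 2 * ((1 - ((n : ℝ) - 1) * ε ^ 2) * H ^ 2) :=
      mul_le_mul_of_nonneg_left p2 hcoe
    have h1e2 : 0 ≤ 1 - ((n : ℝ) - 1) * ε ^ 2 := by
      nlinarith only [hla2ub, hcoe, p2, sq_nonneg ((1 - ((n : ℝ) - 1) * ε) * H), sq_nonneg H, hH, hm, hnε, hε]
    have p4 : (1 - ((n : ℝ) - 1) * ε ^ 2) * (((n : ℝ) - 1) * (ε * H) ^ 2)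
        ≤ (1 - ((n : ℝ) - 1) * ε ^ 2) * L2 :=
      mul_le_mul_of_nonneg_left hL2lb h1e2
    rw [hL2fsplit0]
    nlinarith only [p1, p3, p4]
  -- assemble
  have key1 : L2full * H ^ 2 * S2 - H ^ 2 * w ^ 2 ≤ L2full * D := by
    rw [hDexp]
    nlinarith only [sq_nonneg (L2full * u - H * w)]
  have k2' : H ^ 2 * w ^ 2 ≤ H ^ 2 * ((la ^ 2 + L2 / 2) * (xa ^ 2 + 2 * B2)) :=
    mul_le_mul_of_nonneg_left key2 (sq_nonneg H)
  have hS2split : S2 = xa ^ 2 + B2 := by rw [hB2def]; ring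
  have hL2fsplit : L2full = la ^ 2 + L2 := by rw [hL2def]; ring
  have e2 : L2full * H ^ 2 * S2 + L2full * H ^ 2 * B2
      - H ^ 2 * ((la ^ 2 + L2 / 2) * (xa ^ 2 + 2 * B2))
      = H ^ 2 * (L2 / 2) * xa ^ 2 + H ^ 2 * L2 * B2 := by
    rw [hS2split, hL2fsplit]; ring
  have e3 : 0 ≤ H ^ 2 * L2 * B2 := by positivity
  have e4 : ((n : ℝ) - 1) * ε ^ 2 * L2full * (H ^ 2 * xa ^ 2) ≤ L2 * (H ^ 2 * xa ^ 2) :=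
    mul_le_mul_of_nonneg_right key3 (by positivity)
  have goal' : L2full * (((n : ℝ) - 1) / 2 * ε ^ 2 * H ^ 2 * xa ^ 2)
      ≤ L2full * (D + H ^ 2 * B2) := by nlinarith only [key1, k2', e2, e3, e4]
  have hfin := le_of_mul_le_mul_left goal' hL2full_pos
  linarith only [hfin]

lemma sum_ite_split {n : ℕ} (b : Fin n) (X : ℝ) (g : Fin n → ℝ) :
    (∑ c, (if b = c then X else g c)) = X + ∑ c, (if b = c then 0 else g c) := by
  have h : ∀ c, (if b = c then X else g c)
      = (if b = c then X else 0) + (if b = c then 0 else g c) := by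
    intro c; split_ifs <;> simp
  rw [Finset.sum_congr rfl fun c _ => h c, Finset.sum_add_distrib]
  simp [Finset.sum_ite_eq]

lemma off_ge_two_mix {n : ℕ} (T : Fin n → Fin n → Fin n → ℝ)
    (hT1 : ∀ i j l, T i j l = T j i l) (hT2 : ∀ i j l, T i j l = T i l j) :
    2 * (∑ a, ∑ b, (if a = b then 0 else (T a b b) ^ 2))
      ≤ ∑ a, ∑ b, ∑ c, (if b = c then 0 else (T a b c) ^ 2) := by
  have hswap : (∑ a, ∑ b, ∑ c, (if b = c then 0 else (T a b c) ^ 2))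
      = ∑ b, ∑ c, (if b = c then 0 else ∑ a, (T a b c) ^ 2) := by
    rw [Finset.sum_comm]
    refine Finset.sum_congr rfl fun b _ => ?_
    rw [Finset.sum_comm]
    refine Finset.sum_congr rfl fun c _ => ?_
    split_ifs <;> simp
  have hkey : ∀ b c : Fin n, (if b = c then 0 else ((T b b c) ^ 2 + (T c b c) ^ 2))
      ≤ (if b = c then 0 else ∑ a, (T a b c) ^ 2) := by
    intro b c
    split_ifs with h
    · exact le_refl 0
    · have hsub : ({b, c} : Finset (Fin n)) ⊆ Finset.univ := Finset.subset_univ _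
      have h2 := Finset.sum_le_sum_of_subset_of_nonneg hsub
        (fun a _ _ => sq_nonneg (T a b c))
      rwa [Finset.sum_pair h] at h2
  have hO1 : (∑ b, ∑ c, (if b = c then 0 else (T b b c) ^ 2))
      = ∑ a, ∑ b, (if a = b then 0 else (T a b b) ^ 2) := by
    rw [Finset.sum_comm]
    refine Finset.sum_congr rfl fun c _ => Finset.sum_congr rfl fun b _ => ?_
    by_cases h : b = c
    · simp [h]
    · simp only [h, if_false, Ne.symm h]
      rw [hT2 b b c, hT1 b c b]
  have hO2 : (∑ b, ∑ c, (if b = c then 0 else (T c b c) ^ 2))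
      = ∑ a, ∑ b, (if a = b then 0 else (T a b b) ^ 2) := by
    refine Finset.sum_congr rfl fun b _ => Finset.sum_congr rfl fun c _ => ?_
    by_cases h : b = c
    · simp [h]
    · simp only [h, if_false]
      rw [hT1 c b c]
  have hsum2 : (∑ b, ∑ c, (if b = c then 0 else ((T b b c) ^ 2 + (T c b c) ^ 2)))
      = (∑ b, ∑ c, (if b = c then 0 else (T b b c) ^ 2))
        + (∑ b, ∑ c, (if b = c then 0 else (T c b c) ^ 2)) := by
    rw [← Finset.sum_add_distrib]
    refine Finset.sum_congr rfl fun b _ => ?_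
    rw [← Finset.sum_add_distrib]
    refine Finset.sum_congr rfl fun c _ => ?_
    split_ifs <;> simp
  have hle : (∑ b, ∑ c, (if b = c then 0 else ((T b b c) ^ 2 + (T c b c) ^ 2)))
      ≤ ∑ b, ∑ c, (if b = c then 0 else ∑ a, (T a b c) ^ 2) :=
    Finset.sum_le_sum fun b _ => Finset.sum_le_sum fun c _ => hkey b c
  rw [hswap]
  rw [hsum2, hO1, hO2] at hle
  linarith only [hle]

lemma diag_core (n : ℕ) (hn : 2 ≤ n) (ε H : ℝ) (hε : 0 < ε) (hH : 0 < H)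
    (hnε : (n : ℝ) * ε ≤ 1) (lam : Fin n → ℝ) (hlam : ∀ b, ε * H ≤ lam b)
    (hsum : ∑ b, lam b = H) (T : Fin n → Fin n → Fin n → ℝ)
    (hT1 : ∀ i j l, T i j l = T j i l) (hT2 : ∀ i j l, T i j l = T i l j) :
    ((n : ℝ) - 1) / 2 * ε ^ 2 * H ^ 2 * (∑ a, ∑ b, ∑ c, (T a b c) ^ 2) ≤
      ∑ a, ∑ b, ∑ c, (H * T a b c - (if b = c then lam b else 0) * (∑ p, T a p p)) ^ 2 := by
  have hm : (2 : ℝ) ≤ (n : ℝ) := by exact_mod_cast hn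
  -- split RHS
  have hsq : ∀ a b c, (H * T a b c - (if b = c then lam b else 0) * (∑ p, T a p p)) ^ 2
      = if b = c then (H * T a b b - lam b * (∑ p, T a p p)) ^ 2 else H ^ 2 * (T a b c) ^ 2 := by
    intro a b c
    by_cases h : b = c
    · subst h; simp
    · simp only [h, if_false]; ring
  have hRHS : (∑ a, ∑ b, ∑ c, (H * T a b c - (if b = c then lam b else 0) * (∑ p, T a p p)) ^ 2)
      = (∑ a, ∑ b, (H * T a b b - lam b * (∑ p, T a p p)) ^ 2)
        + H ^ 2 * (∑ a, ∑ b, ∑ c, (if b = c then 0 else (T a b c) ^ 2)) := by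
    calc (∑ a, ∑ b, ∑ c, (H * T a b c - (if b = c then lam b else 0) * (∑ p, T a p p)) ^ 2)
        = ∑ a, ∑ b, ((H * T a b b - lam b * (∑ p, T a p p)) ^ 2
            + ∑ c, (if b = c then 0 else H ^ 2 * (T a b c) ^ 2)) := by
          refine Finset.sum_congr rfl fun a _ => Finset.sum_congr rfl fun b _ => ?_
          rw [Finset.sum_congr rfl fun c _ => hsq a b c, sum_ite_split]
      _ = _ := by
          simp only [Finset.sum_add_distrib]
          congr 1
          rw [Finset.mul_sum]
          refine Finset.sum_congr rfl fun a _ => ?_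
          rw [Finset.mul_sum]
          refine Finset.sum_congr rfl fun b _ => ?_
          rw [Finset.mul_sum]
          refine Finset.sum_congr rfl fun c _ => ?_
          split_ifs <;> simp
  -- split total sum
  have hTot : (∑ a, ∑ b, ∑ c, (T a b c) ^ 2)
      = (∑ a, (T a a a) ^ 2) + (∑ a, ∑ b, (if a = b then 0 else (T a b b) ^ 2))
        + (∑ a, ∑ b, ∑ c, (if b = c then 0 else (T a b c) ^ 2)) := by
    have h1 : ∀ a b : Fin n, (∑ c, (T a b c) ^ 2)
        = (T a b b) ^ 2 + ∑ c, (if b = c then 0 else (T a b c) ^ 2) := by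
      intro a b
      have := sum_ite_split b ((T a b b) ^ 2) (fun c => (T a b c) ^ 2)
      rw [← this]
      refine Finset.sum_congr rfl fun c _ => ?_
      split_ifs with h
      · rw [h]
      · rfl
    have h2 : ∀ a : Fin n, (∑ b, (T a b b) ^ 2)
        = (T a a a) ^ 2 + ∑ b, (if a = b then 0 else (T a b b) ^ 2) := by
      intro a
      have := sum_ite_split a ((T a a a) ^ 2) (fun b => (T a b b) ^ 2)
      rw [← this]
      refine Finset.sum_congr rfl fun b _ => ?_
      split_ifs with h
      · rw [h]
      · rfl
    calc (∑ a, ∑ b, ∑ c, (T a b c) ^ 2)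
        = ∑ a, ∑ b, ((T a b b) ^ 2 + ∑ c, (if b = c then 0 else (T a b c) ^ 2)) := by
          exact Finset.sum_congr rfl fun a _ => Finset.sum_congr rfl fun b _ => h1 a b
      _ = (∑ a, ∑ b, (T a b b) ^ 2)
            + (∑ a, ∑ b, ∑ c, (if b = c then 0 else (T a b c) ^ 2)) := by
          simp only [Finset.sum_add_distrib]
      _ = _ := by
          rw [Finset.sum_congr rfl fun a _ => h2 a, Finset.sum_add_distrib]
  -- claim 1 summed over a
  have hca : ∀ a : Fin n, ((n : ℝ) - 1) / 2 * ε ^ 2 * H ^ 2 * (T a a a) ^ 2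
      ≤ (∑ b, (H * T a b b - lam b * (∑ p, T a p p)) ^ 2)
        + H ^ 2 * (∑ b, (if a = b then 0 else (T a b b) ^ 2)) := by
    intro a
    have hc := claim1 n hn ε H hε hH hnε lam hlam hsum (fun b => T a b b) a
    have hmix : (∑ b, (T a b b) ^ 2) - (T a a a) ^ 2
        = ∑ b, (if a = b then 0 else (T a b b) ^ 2) := by
      have := sum_ite_split a ((T a a a) ^ 2) (fun b => (T a b b) ^ 2)
      have h3 : (∑ b, (T a b b) ^ 2)
          = (T a a a) ^ 2 + ∑ b, (if a = b then 0 else (T a b b) ^ 2) := by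
        rw [← this]
        refine Finset.sum_congr rfl fun b _ => ?_
        split_ifs with h
        · rw [h]
        · rfl
      linarith only [h3]
    rw [hmix] at hc
    exact hc
  have hclaimsum : ((n : ℝ) - 1) / 2 * ε ^ 2 * H ^ 2 * (∑ a, (T a a a) ^ 2)
      ≤ (∑ a, ∑ b, (H * T a b b - lam b * (∑ p, T a p p)) ^ 2)
        + H ^ 2 * (∑ a, ∑ b, (if a = b then 0 else (T a b b) ^ 2)) := by
    have := Finset.sum_le_sum fun a (_ : a ∈ Finset.univ) => hca a
    rw [Finset.sum_add_distrib, ← Finset.mul_sum, ← Finset.mul_sum] at this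
    exact this
  have hOffMix := off_ge_two_mix T hT1 hT2
  -- bound on the constant
  have hcc2 : ((n : ℝ) - 1) / 2 * ε ^ 2 ≤ 1 / 3 := by
    have h2ε : 2 * ε ≤ 1 := by nlinarith only [hnε, hm, hε.le]
    have hq : (n : ℝ) * ε * ε ≤ 1 * ε := mul_le_mul_of_nonneg_right hnε hε.le
    nlinarith only [hq, h2ε, sq_nonneg ε, hε.le]
  have hcc1 : 0 ≤ ((n : ℝ) - 1) / 2 * ε ^ 2 :=
    mul_nonneg (by linarith only [hm]) (sq_nonneg ε)
  -- nonnegativity of pieces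
  have hMixnn : 0 ≤ ∑ a, ∑ b, (if a = b then 0 else (T a b b) ^ 2) :=
    Finset.sum_nonneg fun a _ => Finset.sum_nonneg fun b _ => by split_ifs <;> simp [sq_nonneg]
  have hOffnn : 0 ≤ ∑ a, ∑ b, ∑ c, (if b = c then 0 else (T a b c) ^ 2) :=
    Finset.sum_nonneg fun a _ => Finset.sum_nonneg fun b _ =>
      Finset.sum_nonneg fun c _ => by split_ifs <;> simp [sq_nonneg]
  -- final assembly
  set cc := ((n : ℝ) - 1) / 2 * ε ^ 2 with hccdef
  set Off := ∑ a, ∑ b, ∑ c, (if b = c then 0 else (T a b c) ^ 2) with hOffdef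
  set Mix := ∑ a, ∑ b, (if a = b then 0 else (T a b b) ^ 2) with hMixdef
  set Diag3 := ∑ a, (T a a a) ^ 2 with hDiag3def
  set Dsum := ∑ a, ∑ b, (H * T a b b - lam b * (∑ p, T a p p)) ^ 2 with hDsumdef
  clear_value cc Off Mix Diag3 Dsum
  rw [hRHS, hTot]
  have q1 : H ^ 2 * (2 * Mix) ≤ H ^ 2 * Off :=
    mul_le_mul_of_nonneg_left hOffMix (sq_nonneg H)
  have q2 : cc * (H ^ 2 * Off) ≤ 1 / 3 * (H ^ 2 * Off) :=
    mul_le_mul_of_nonneg_right hcc2 (mul_nonneg (sq_nonneg H) hOffnn)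
  have q3 : cc * (H ^ 2 * Mix) ≤ 1 / 3 * (H ^ 2 * Mix) :=
    mul_le_mul_of_nonneg_right hcc2 (mul_nonneg (sq_nonneg H) hMixnn)
  nlinarith only [hclaimsum, q1, q2, q3]

end Stmt5Aux

open Stmt5Aux in
/-- Pointwise algebraic content of the gradient estimate
`|H∇α − α∇H|² ≥ ((n−1)/2)ε²H²|∇A|²`:  let `A` be a real symmetric `n×n` matrix with
`tr A > 0` and `A − ε·(tr A)·I` positive semidefinite, and let `T` be a totally
symmetric 3-tensor.  With `H = tr A` and `U_i = Σ_p T_{ipp}`, one has `ε ≤ 1/n` and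
`Σ_{i,j,l} (H·T_{ijl} − A_{jl}·U_i)² ≥ ((n−1)/2)·ε²·H²·Σ_{i,j,l} T_{ijl}²`. -/
theorem stmt5 (n : ℕ) (hn : 2 ≤ n) (ε : ℝ) (hε : 0 < ε)
    (A : Matrix (Fin n) (Fin n) ℝ) (hA : A.IsSymm) (htr : 0 < A.trace)
    (hpin : (A - (ε * A.trace) • (1 : Matrix (Fin n) (Fin n) ℝ)).PosSemidef)
    (T : Fin n → Fin n → Fin n → ℝ)
    (hT1 : ∀ i j l, T i j l = T j i l) (hT2 : ∀ i j l, T i j l = T i l j) :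
    ε ≤ 1 / n ∧
      ((n : ℝ) - 1) / 2 * ε ^ 2 * A.trace ^ 2 * (∑ i, ∑ j, ∑ l, (T i j l) ^ 2) ≤
        ∑ i, ∑ j, ∑ l, (A.trace * T i j l - A j l * (∑ p, T i p p)) ^ 2 := by
  have hεn : ε ≤ 1 / n := by
    have hpsd_diag : ∀ (M : Matrix (Fin n) (Fin n) ℝ), M.PosSemidef → ∀ b, 0 ≤ M b b :=
      fun M hM b => by simpa using hM.dotProduct_mulVec_nonneg (Pi.single b 1)
    have htrP : 0 ≤ (A - (ε * A.trace) • (1 : Matrix (Fin n) (Fin n) ℝ)).trace := by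
      rw [Matrix.trace]
      exact Finset.sum_nonneg fun b _ => hpsd_diag _ hpin b
    have htrace_eq : (A - (ε * A.trace) • (1 : Matrix (Fin n) (Fin n) ℝ)).trace
        = A.trace - ε * A.trace * n := by
      rw [Matrix.trace_sub, Matrix.trace_smul, Matrix.trace_one]
      simp [smul_eq_mul, Fintype.card_fin]
    have hnε : (n : ℝ) * ε ≤ 1 := by
      rw [htrace_eq] at htrP
      nlinarith [htrP, htr]
    have hn0 : (0 : ℝ) < n := by
      have : (2:ℝ) ≤ (n:ℝ) := by exact_mod_cast hn
      linarith
    rw [le_div_iff₀ hn0]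
    linarith [hnε]
  refine ⟨hεn, ?_⟩
  have hnε : (n : ℝ) * ε ≤ 1 := by
    have hn0 : (0 : ℝ) < n := by
      have h2 : (2:ℝ) ≤ (n:ℝ) := by exact_mod_cast hn
      linarith
    rw [le_div_iff₀ hn0] at hεn
    linarith [hεn]
  have hHerm : A.IsHermitian := by
    rw [Matrix.IsHermitian, Matrix.conjTranspose_eq_transpose_of_trivial]; exact hA
  set O : Matrix (Fin n) (Fin n) ℝ := (hHerm.eigenvectorUnitary : Matrix (Fin n) (Fin n) ℝ)
    with hOdef
  set lam : Fin n → ℝ := hHerm.eigenvalues with hlamdef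
  have hOO : O * star O = 1 := Matrix.mem_unitaryGroup_iff.mp (hHerm.eigenvectorUnitary).2
  have hOO' : star O * O = 1 := Matrix.mem_unitaryGroup_iff'.mp (hHerm.eigenvectorUnitary).2
  have hOrow : ∀ i i', (∑ a, O i a * O i' a) = if i = i' then 1 else 0 := by
    intro i i'
    have h := congrFun (congrFun hOO i) i'
    simpa [Matrix.mul_apply, Matrix.one_apply, Matrix.star_apply] using h
  have hdiag : star O * A * O = diagonal lam := by
    have h := hHerm.conjStarAlgAut_star_eigenvectorUnitary
    simp only [Unitary.conjStarAlgAut_star_apply, RCLike.ofReal_real_eq_id, Function.id_comp] at h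
    rw [hlamdef]
    convert h using 2
  -- entry form of the diagonalization
  have hABentry : ∀ b c, (∑ j, ∑ l, A j l * O j b * O l c) = if b = c then lam b else 0 := by
    intro b c
    have hL : (star O * A * O) b c = ∑ j, ∑ l, A j l * O j b * O l c := by
      calc (star O * A * O) b c
          = ∑ l, (star O * A) b l * O l c := Matrix.mul_apply
        _ = ∑ l, ∑ j, (star O) b j * A j l * O l c := by
            refine Finset.sum_congr rfl fun l _ => ?_
            rw [Matrix.mul_apply, Finset.sum_mul]
        _ = ∑ j, ∑ l, A j l * O j b * O l c := by
            rw [Finset.sum_comm]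
            refine Finset.sum_congr rfl fun j _ => Finset.sum_congr rfl fun l _ => ?_
            simp only [Matrix.star_apply, star_trivial]
            ring
    rw [← hL, hdiag, Matrix.diagonal_apply]
  -- trace identity
  have hsum : ∑ b, lam b = A.trace := by
    have h := congrArg Matrix.trace hdiag
    rw [Matrix.trace_mul_cycle, hOO, Matrix.one_mul, Matrix.trace_diagonal] at h
    exact h.symm
  -- eigenvalue pinching
  have hlam : ∀ b, ε * A.trace ≤ lam b := by
    intro b
    have hpsd2 := hpin.conjTranspose_mul_mul_same O
    have hstar : Oᴴ = star O := rfl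
    have hexp : Oᴴ * (A - (ε * A.trace) • (1 : Matrix (Fin n) (Fin n) ℝ)) * O
        = diagonal lam - (ε * A.trace) • (1 : Matrix (Fin n) (Fin n) ℝ) := by
      rw [Matrix.mul_sub, Matrix.sub_mul, Matrix.mul_smul, Matrix.mul_one,
        Matrix.smul_mul, hstar, hdiag, hOO']
    rw [hexp] at hpsd2
    have h0 := (by simpa using hpsd2.dotProduct_mulVec_nonneg (Pi.single b 1) :
      0 ≤ (diagonal lam - (ε * A.trace) • (1 : Matrix (Fin n) (Fin n) ℝ)) b b)
    simp only [Matrix.sub_apply, Matrix.diagonal_apply_eq, Matrix.smul_apply,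
      Matrix.one_apply_eq, smul_eq_mul, mul_one] at h0
    linarith only [h0]
  -- rotated tensor
  set T' : Fin n → Fin n → Fin n → ℝ :=
    fun a b c => ∑ i, ∑ j, ∑ l, T i j l * O i a * O j b * O l c with hT'def
  have hT'sq : (∑ a, ∑ b, ∑ c, (T' a b c) ^ 2) = ∑ i, ∑ j, ∑ l, (T i j l) ^ 2 := by
    rw [hT'def]; exact rot3_sq O hOrow T
  have hsym1' : ∀ i j l, T' i j l = T' j i l := by
    intro a b c; rw [hT'def]; exact rot_symm12 O T hT1 a b c
  have hsym2' : ∀ i j l, T' i j l = T' i l j := by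
    intro a b c; rw [hT'def]; exact rot_symm23 O T hT2 a b c
  have hU'eq : ∀ a, (∑ p, T' a p p) = ∑ i, (∑ p, T i p p) * O i a := by
    intro a; rw [hT'def]; exact rot_trace O hOrow T a
  -- rotation of E
  have hlin : ∀ a b c, (∑ i, ∑ j, ∑ l,
        (A.trace * T i j l - A j l * (∑ p, T i p p)) * O i a * O j b * O l c)
      = A.trace * T' a b c
        - (∑ i, (∑ p, T i p p) * O i a) * (∑ j, ∑ l, A j l * O j b * O l c) := by
    intro a b c
    rw [hT'def]
    calc (∑ i, ∑ j, ∑ l,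
          (A.trace * T i j l - A j l * (∑ p, T i p p)) * O i a * O j b * O l c)
        = ∑ i, ∑ j, ∑ l, (A.trace * (T i j l * O i a * O j b * O l c)
            - ((∑ p, T i p p) * O i a) * (A j l * O j b * O l c)) :=
          Finset.sum_congr rfl fun i _ => Finset.sum_congr rfl fun j _ =>
            Finset.sum_congr rfl fun l _ => by ring
      _ = (∑ i, ∑ j, ∑ l, A.trace * (T i j l * O i a * O j b * O l c))
          - ∑ i, ∑ j, ∑ l, ((∑ p, T i p p) * O i a) * (A j l * O j b * O l c) := by
          simp only [Finset.sum_sub_distrib]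
      _ = A.trace * (∑ i, ∑ j, ∑ l, T i j l * O i a * O j b * O l c)
          - (∑ i, ((∑ p, T i p p) * O i a)) * (∑ j, ∑ l, A j l * O j b * O l c) := by
          congr 1
          · simp only [← Finset.mul_sum]
          · rw [Finset.sum_mul]
            exact Finset.sum_congr rfl fun i _ => by simp only [← Finset.mul_sum]
  have hrotE : ∀ a b c, (∑ i, ∑ j, ∑ l,
        (A.trace * T i j l - A j l * (∑ p, T i p p)) * O i a * O j b * O l c)
      = A.trace * T' a b c - (if b = c then lam b else 0) * (∑ p, T' a p p) := by
    intro a b c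
    rw [hlin a b c, hABentry b c, hU'eq a]
    ring
  -- put everything together
  have hE'sq : (∑ a, ∑ b, ∑ c, (∑ i, ∑ j, ∑ l,
        (A.trace * T i j l - A j l * (∑ p, T i p p)) * O i a * O j b * O l c) ^ 2)
      = ∑ i, ∑ j, ∑ l, (A.trace * T i j l - A j l * (∑ p, T i p p)) ^ 2 :=
    rot3_sq O hOrow (fun i j l => A.trace * T i j l - A j l * (∑ p, T i p p))
  have hcore := diag_core n hn ε A.trace hε htr hnε lam hlam hsum T' hsym1' hsym2'
  have hEE : (∑ a, ∑ b, ∑ c,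
        (A.trace * T' a b c - (if b = c then lam b else 0) * (∑ p, T' a p p)) ^ 2)
      = ∑ i, ∑ j, ∑ l, (A.trace * T i j l - A j l * (∑ p, T i p p)) ^ 2 := by
    rw [← hE'sq]
    exact Finset.sum_congr rfl fun a _ => Finset.sum_congr rfl fun b _ =>
      Finset.sum_congr rfl fun c _ => by rw [hrotE a b c]
  rw [← hT'sq, ← hEE]
  exact hcore
end

section
/- Let n ≥ 2, m ∈ {1,…,n} and β > 1/m, and set σ(k) = H_m(k)^β on the open positive cone Γ₊ ⊂ ℝ^n. For every ε ∈ (0, 1/n] there exists a constant M₁ = M₁(n,m,β,ε) > 0 such that for every k ∈ ℝ^n satisfying min_i k_i ≥ ε·H(k) > 0 and every index i ∈ {1,…,n}, one has ∂σ/∂k_i(k) ≥ M₁·|k|^{mβ−1}, where |k| is the Euclidean norm. -/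
lemma hm_hasFDerivAt (n m : ℕ) (k : Fin n → ℝ) :
    HasFDerivAt (fun k => Hm n m k)
      ((((Nat.factorial m * Nat.factorial (n - m) : ℕ) : ℝ) / (Nat.factorial n : ℝ)) •
        ∑ s ∈ Finset.powersetCard m Finset.univ,
          ∑ j ∈ s, (∏ l ∈ s.erase j, k l) •
            (ContinuousLinearMap.proj j : (Fin n → ℝ) →L[ℝ] ℝ)) k := by
  have h1 : ∀ s ∈ Finset.powersetCard m (Finset.univ : Finset (Fin n)),
      HasFDerivAt (fun k : Fin n → ℝ => ∏ j ∈ s, k j)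
        (∑ j ∈ s, (∏ l ∈ s.erase j, k l) •
          (ContinuousLinearMap.proj j : (Fin n → ℝ) →L[ℝ] ℝ)) k := by
    intro s _
    exact HasFDerivAt.finset_prod fun j _ =>
      (ContinuousLinearMap.proj j : (Fin n → ℝ) →L[ℝ] ℝ).hasFDerivAt
  have h2 := HasFDerivAt.fun_sum h1
  exact h2.const_mul _

lemma hm_fderiv_apply (n m : ℕ) (β : ℝ) (k : Fin n → ℝ) (hpos : 0 < Hm n m k) (i : Fin n) :
    fderiv ℝ (fun k => Hm n m k ^ β) k (Pi.single i 1) =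
      β * Hm n m k ^ (β - 1) *
        (((Nat.factorial m * Nat.factorial (n - m) : ℕ) : ℝ) / (Nat.factorial n : ℝ) *
          ∑ s ∈ Finset.powersetCard m Finset.univ,
            (if i ∈ s then ∏ l ∈ s.erase i, k l else 0)) := by
  have hr := Real.hasDerivAt_rpow_const (x := Hm n m k) (p := β) (Or.inl hpos.ne')
  have h := hr.comp_hasFDerivAt k (hm_hasFDerivAt n m k)
  have h' : HasFDerivAt (fun k => Hm n m k ^ β) _ k := h
  rw [h'.fderiv]
  simp only [ContinuousLinearMap.coe_smul', Pi.smul_apply, ContinuousLinearMap.coe_sum',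
    Finset.sum_apply, ContinuousLinearMap.smul_apply, ContinuousLinearMap.proj_apply,
    Pi.single_apply, smul_eq_mul, mul_ite, mul_one, mul_zero, Finset.sum_ite_eq',
    Finset.mul_sum]

lemma aux_rpow (a P x t : ℝ) (ha0 : 0 < a) (ha1 : a ≤ 1) (hP : 0 < P)
    (h1 : a * P ≤ x) (h2 : x ≤ P) : a ^ |t| * P ^ t ≤ x ^ t := by
  have hx : 0 < x := lt_of_lt_of_le (by positivity) h1
  rcases le_total 0 t with ht | ht
  · rw [abs_of_nonneg ht]
    calc a ^ t * P ^ t = (a * P) ^ t := (Real.mul_rpow ha0.le hP.le).symm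
      _ ≤ x ^ t := Real.rpow_le_rpow (by positivity) h1 ht
  · rw [abs_of_nonpos ht]
    have h3 : a ^ (-t) ≤ 1 := Real.rpow_le_one ha0.le ha1 (neg_nonneg.2 ht)
    have h4 : P ^ t ≤ x ^ t := Real.rpow_le_rpow_of_nonpos hx h2 ht
    calc a ^ (-t) * P ^ t ≤ 1 * P ^ t :=
          mul_le_mul_of_nonneg_right h3 (Real.rpow_pos_of_pos hP t).le
      _ = P ^ t := one_mul _
      _ ≤ x ^ t := h4

/-- Let `σ = H_m^β` with `β > 1/m`.  For every `ε ∈ (0, 1/n]` there exists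
`M₁ = M₁(n,m,β,ε) > 0` such that for every `k` with `min_i k_i ≥ ε·H(k) > 0` and
every index `i`, `∂σ/∂k_i(k) ≥ M₁·|k|^(mβ−1)` with `|k|` the Euclidean norm. -/
theorem stmt8 (n m : ℕ) (β : ℝ) (hn : 2 ≤ n) (hm1 : 1 ≤ m) (hmn : m ≤ n)
    (hβ : 1 / (m : ℝ) < β) (ε : ℝ) (hε1 : 0 < ε) (hε2 : ε ≤ 1 / n) :
    ∃ M₁ > (0 : ℝ), ∀ k : Fin n → ℝ, 0 < ∑ j, k j →
      (∀ i, ε * (∑ j, k j) ≤ k i) → ∀ i,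
      M₁ * Real.sqrt (∑ j, (k j) ^ 2) ^ ((m : ℝ) * β - 1) ≤
        fderiv ℝ (fun k => Hm n m k ^ β) k (Pi.single i 1) := by
  set c : ℝ := ((Nat.factorial m * Nat.factorial (n - m) : ℕ) : ℝ) / (Nat.factorial n : ℝ)
    with hc_def
  have hc : 0 < c := by
    apply div_pos <;> [skip; skip] <;>
      exact_mod_cast Nat.pos_of_ne_zero (by positivity)
  have hm0 : (0:ℝ) < m := by exact_mod_cast hm1
  have hβ0 : (0:ℝ) < β := lt_trans (by positivity) hβ
  have hε1' : ε ≤ 1 := by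
    have hn0 : (1:ℝ) ≤ n := by exact_mod_cast le_trans one_le_two hn
    calc ε ≤ 1 / n := hε2
      _ ≤ 1 / 1 := by apply div_le_div_of_nonneg_left <;> linarith
      _ = 1 := by norm_num
  have hchoose : c * (Nat.choose n m : ℝ) = 1 := by
    have hfact : (Nat.choose n m * (Nat.factorial m * Nat.factorial (n - m)) : ℕ)
        = Nat.factorial n := by
      rw [← Nat.choose_mul_factorial_mul_factorial hmn]; ring
    have hn0 : (Nat.factorial n : ℝ) ≠ 0 := Nat.cast_ne_zero.2 (Nat.factorial_ne_zero n)
    rw [hc_def, div_mul_eq_mul_div, div_eq_one_iff_eq hn0, ← hfact]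
    push_cast; ring
  refine ⟨β * (ε ^ m) ^ |β - 1| * (c * ε ^ (m - 1)), by positivity, ?_⟩
  intro k hH hk i
  set H : ℝ := ∑ j, k j with hH_def
  have hεH : 0 < ε * H := by positivity
  have hki : ∀ j, 0 < k j := fun j => lt_of_lt_of_le hεH (hk j)
  have hkH : ∀ j, k j ≤ H := fun j =>
    Finset.single_le_sum (fun l _ => (hki l).le) (Finset.mem_univ j)
  -- bounds on Hm
  have hSlb : (Nat.choose n m : ℝ) * (ε * H) ^ m
      ≤ ∑ s ∈ Finset.powersetCard m (Finset.univ : Finset (Fin n)), ∏ j ∈ s, k j := by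
    have hcard : ((Finset.powersetCard m (Finset.univ : Finset (Fin n))).card : ℝ)
        = (Nat.choose n m : ℝ) := by
      rw [Finset.card_powersetCard, Finset.card_univ, Fintype.card_fin]
    calc (Nat.choose n m : ℝ) * (ε * H) ^ m
        = ∑ _s ∈ Finset.powersetCard m (Finset.univ : Finset (Fin n)), (ε * H) ^ m := by
          rw [Finset.sum_const, nsmul_eq_mul, hcard]
      _ ≤ _ := by
          apply Finset.sum_le_sum
          intro s hs
          have hsc : s.card = m := (Finset.mem_powersetCard.1 hs).2
          calc (ε * H) ^ m = ∏ _j ∈ s, (ε * H) := by rw [Finset.prod_const, hsc]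
            _ ≤ ∏ j ∈ s, k j :=
              Finset.prod_le_prod (fun j _ => hεH.le) (fun j _ => hk j)
  have hSub : (∑ s ∈ Finset.powersetCard m (Finset.univ : Finset (Fin n)), ∏ j ∈ s, k j)
      ≤ (Nat.choose n m : ℝ) * H ^ m := by
    have hcard : ((Finset.powersetCard m (Finset.univ : Finset (Fin n))).card : ℝ)
        = (Nat.choose n m : ℝ) := by
      rw [Finset.card_powersetCard, Finset.card_univ, Fintype.card_fin]
    calc (∑ s ∈ Finset.powersetCard m (Finset.univ : Finset (Fin n)), ∏ j ∈ s, k j)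
        ≤ ∑ _s ∈ Finset.powersetCard m (Finset.univ : Finset (Fin n)), H ^ m := by
          apply Finset.sum_le_sum
          intro s hs
          have hsc : s.card = m := (Finset.mem_powersetCard.1 hs).2
          calc (∏ j ∈ s, k j) ≤ ∏ _j ∈ s, H :=
              Finset.prod_le_prod (fun j _ => (hki j).le) (fun j _ => hkH j)
            _ = H ^ m := by rw [Finset.prod_const, hsc]
      _ = (Nat.choose n m : ℝ) * H ^ m := by rw [Finset.sum_const, nsmul_eq_mul, hcard]
  have hHmlb : ε ^ m * H ^ m ≤ Hm n m k := by
    have := mul_le_mul_of_nonneg_left hSlb hc.le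
    calc ε ^ m * H ^ m = c * (Nat.choose n m : ℝ) * (ε * H) ^ m := by
          rw [hchoose, mul_pow]; ring
      _ ≤ Hm n m k := by rw [Hm, ← hc_def]; linarith [this]
  have hHmub : Hm n m k ≤ H ^ m := by
    have := mul_le_mul_of_nonneg_left hSub hc.le
    calc Hm n m k ≤ c * ((Nat.choose n m : ℝ) * H ^ m) := by
          rw [Hm, ← hc_def]; linarith [this]
      _ = H ^ m := by rw [← mul_assoc, hchoose, one_mul]
  have hHmpos : 0 < Hm n m k := lt_of_lt_of_le (by positivity) hHmlb
  -- lower bound for the derivative sum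
  set Qs : ℝ := ∑ s ∈ Finset.powersetCard m (Finset.univ : Finset (Fin n)),
      (if i ∈ s then ∏ l ∈ s.erase i, k l else 0) with hQs_def
  have hQlb : (ε * H) ^ (m - 1) ≤ Qs := by
    have hcard : m - 1 ≤ ((Finset.univ : Finset (Fin n)).erase i).card := by
      rw [Finset.card_erase_of_mem (Finset.mem_univ i), Finset.card_univ, Fintype.card_fin]
      omega
    obtain ⟨t, hts, htc⟩ := Finset.exists_subset_card_eq hcard
    have hit : i ∉ t := fun h => (Finset.mem_erase.1 (hts h)).1 rfl
    have hs0mem : insert i t ∈ Finset.powersetCard m (Finset.univ : Finset (Fin n)) := by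
      rw [Finset.mem_powersetCard]
      refine ⟨Finset.subset_univ _, ?_⟩
      rw [Finset.card_insert_of_notMem hit, htc]
      omega
    have hterm : (ε * H) ^ (m - 1)
        ≤ (if i ∈ insert i t then ∏ l ∈ (insert i t).erase i, k l else 0) := by
      rw [if_pos (Finset.mem_insert_self i t), Finset.erase_insert hit]
      calc (ε * H) ^ (m - 1) = ∏ _l ∈ t, (ε * H) := by rw [Finset.prod_const, htc]
        _ ≤ ∏ l ∈ t, k l := Finset.prod_le_prod (fun l _ => hεH.le) (fun l _ => hk l)
    calc (ε * H) ^ (m - 1) ≤ _ := hterm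
      _ ≤ Qs := Finset.single_le_sum (f := fun s =>
            (if i ∈ s then ∏ l ∈ s.erase i, k l else 0))
          (fun s _ => by
            by_cases h : i ∈ s <;>
              simp [h, Finset.prod_nonneg fun l _ => (hki l).le]) hs0mem
  -- norm bound
  have hsqrt : Real.sqrt (∑ j, (k j) ^ 2) ≤ H := by
    have h1 : (∑ j, (k j) ^ 2) ≤ H ^ 2 := by
      calc (∑ j, (k j) ^ 2) ≤ ∑ j, k j * H :=
          Finset.sum_le_sum (fun j _ => by nlinarith [hki j, hkH j])
        _ = H ^ 2 := by rw [← Finset.sum_mul, ← hH_def]; ring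
    calc Real.sqrt (∑ j, (k j) ^ 2) ≤ Real.sqrt (H ^ 2) := Real.sqrt_le_sqrt h1
      _ = H := by rw [Real.sqrt_sq hH.le]
  have hexp : 0 < (m : ℝ) * β - 1 := by
    have := (div_lt_iff₀ hm0).1 hβ
    linarith
  -- key rpow inequality
  have hkey : (ε ^ m) ^ |β - 1| * H ^ ((m : ℝ) * (β - 1)) ≤ Hm n m k ^ (β - 1) := by
    have h1 : (H ^ m : ℝ) ^ (β - 1) = H ^ ((m : ℝ) * (β - 1)) := by
      rw [← Real.rpow_natCast H m, ← Real.rpow_mul hH.le]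
    rw [← h1]
    exact aux_rpow (ε ^ m) (H ^ m) (Hm n m k) (β - 1) (by positivity)
      (pow_le_one₀ hε1.le hε1') (by positivity) hHmlb hHmub
  have hsplit : H ^ ((m : ℝ) * β - 1)
      = H ^ ((m : ℝ) * (β - 1)) * H ^ (m - 1 : ℕ) := by
    rw [← Real.rpow_natCast H (m - 1), ← Real.rpow_add hH]
    congr 1
    rw [Nat.cast_sub hm1]
    push_cast; ring
  -- put everything together
  rw [hm_fderiv_apply n m β k hHmpos i, ← hc_def, ← hQs_def]
  calc β * (ε ^ m) ^ |β - 1| * (c * ε ^ (m - 1)) * Real.sqrt (∑ j, (k j) ^ 2) ^ ((m : ℝ) * β - 1)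
      ≤ β * (ε ^ m) ^ |β - 1| * (c * ε ^ (m - 1)) * H ^ ((m : ℝ) * β - 1) := by
        apply mul_le_mul_of_nonneg_left _ (by positivity)
        exact Real.rpow_le_rpow (Real.sqrt_nonneg _) hsqrt hexp.le
    _ = β * ((ε ^ m) ^ |β - 1| * H ^ ((m : ℝ) * (β - 1))) * (c * (ε ^ (m - 1) * H ^ (m - 1 : ℕ))) := by
        rw [hsplit]; ring
    _ ≤ β * Hm n m k ^ (β - 1) * (c * Qs) := by
        apply mul_le_mul
        · exact mul_le_mul_of_nonneg_left hkey hβ0.le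
        · apply mul_le_mul_of_nonneg_left _ hc.le
          calc ε ^ (m - 1) * H ^ (m - 1 : ℕ) = (ε * H) ^ (m - 1) := (mul_pow ε H (m - 1)).symm
            _ ≤ Qs := hQlb
        · positivity
        · positivity
end

section
/- Let n ≥ 2, m ∈ {1,…,n} and β > 1/m. Define, for an n×n real matrix A, σ̂(A) = Ĥ_m(A)^β, where Ĥ_m(A) = (m!(n−m)!/n!)·(−1)^m times the coefficient of X^{n−m} in the characteristic polynomial det(X·I − A) (so Ĥ_m(A) is the normalized m-th elementary symmetric polynomial of the eigenvalues of A). For every ε ∈ (0, 1/n] there exists a constant M₂ = M₂(n,m,β,ε) > 0 such that: for every real symmetric n×n matrix A with tr A > 0 and A − ε·(tr A)·I positive semidefinite, σ̂ is twice Fréchet differentiable at A and its second derivative satisfies |D²σ̂(A)[B,B]| ≤ M₂·‖A‖^{mβ−2}·‖B‖² for every n×n real matrix B, where ‖·‖ denotes the Frobenius norm. -/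
attribute [local instance] Matrix.frobeniusNormedAddCommGroup Matrix.frobeniusNormedSpace

/-- `Ĥ_m(A)`: the normalized `m`-th elementary symmetric polynomial of the eigenvalues
of `A`, defined through the characteristic polynomial: it is `(m!(n−m)!/n!)·(−1)^m`
times the coefficient of `X^(n−m)` in `det(X·I − A)`. -/
noncomputable def HmMat (n m : ℕ) (A : Matrix (Fin n) (Fin n) ℝ) : ℝ :=
  ((Nat.factorial m * Nat.factorial (n - m) : ℕ) : ℝ) / (Nat.factorial n : ℝ) *
    ((-1 : ℝ) ^ m * (Matrix.charpoly A).coeff (n - m))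



variable {n m : ℕ}


open Polynomial in
lemma charpoly_conj_aux {n : ℕ} (U V M : Matrix (Fin n) (Fin n) ℝ) (hUV : U * V = 1) (hVU : V * U = 1) :
    (U * M * V).charpoly = M.charpoly := by
  have hscal : U.map C * Matrix.scalar (Fin n) X * V.map C = Matrix.scalar (Fin n) X := by
    rw [← (Matrix.scalar_commute X (fun r => Commute.all _ _) (U.map C)).eq, mul_assoc,
      ← Matrix.map_mul, hUV]
    simp
  have hcm : Matrix.charmatrix (U * M * V) = U.map C * Matrix.charmatrix M * V.map C := by
    unfold Matrix.charmatrix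
    simp only [Matrix.mul_sub, Matrix.sub_mul, RingHom.mapMatrix_apply, Matrix.map_mul]
    rw [hscal]
  have hdet : (U.map C).det * (V.map C).det = 1 := by
    rw [← Matrix.det_mul, ← Matrix.map_mul, hUV]; simp
  unfold Matrix.charpoly
  rw [hcm, Matrix.det_mul, Matrix.det_mul]
  ring_nf
  rw [mul_comm, ← mul_assoc, mul_comm ((V.map C).det), hdet, one_mul]

lemma eval_smul_of_isHomogeneous {σ : Type*} [Fintype σ] (φ : MvPolynomial σ ℝ) (d : ℕ)
    (h : φ.IsHomogeneous d) (r : ℝ) (x : σ → ℝ) :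
    MvPolynomial.eval (fun i => r * x i) φ = r ^ d * MvPolynomial.eval x φ := by
  rw [MvPolynomial.eval_eq', MvPolynomial.eval_eq', Finset.mul_sum]
  apply Finset.sum_congr rfl
  intro c hc
  have hdeg : ∑ i, c i = d := by
    have h2 := h (MvPolynomial.mem_support_iff.mp hc)
    replace h2 : Finsupp.degree c = d := by rw [Finsupp.degree_eq_weight_one]; exact h2
    rw [← h2, Finsupp.degree]
    exact (Finset.sum_subset (Finset.subset_univ _)
      (fun i _ hi => Finsupp.notMem_support_iff.mp hi)).symm
  calc MvPolynomial.coeff c φ * ∏ i, (r * x i) ^ c i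
      = MvPolynomial.coeff c φ * ((∏ i, r ^ c i) * ∏ i, x i ^ c i) := by
        rw [← Finset.prod_mul_distrib]; simp_rw [mul_pow]
    _ = r ^ d * (MvPolynomial.coeff c φ * ∏ i, x i ^ c i) := by
        rw [Finset.prod_pow_eq_pow_sum, hdeg]; ring

open Polynomial in
lemma charpoly_diagonal {n : ℕ} (d : Fin n → ℝ) :
    (Matrix.diagonal d).charpoly = ∏ i, (X - C (d i)) := by
  have : Matrix.charmatrix (Matrix.diagonal d) = Matrix.diagonal (fun i => X - C (d i)) := by
    ext i j
    rcases eq_or_ne i j with rfl | hij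
    · simp [Matrix.charmatrix_apply_eq]
    · simp [Matrix.charmatrix_apply_ne _ _ _ hij, Matrix.diagonal_apply_ne _ hij,
        Matrix.diagonal_apply_ne]
  rw [Matrix.charpoly, this, Matrix.det_diagonal]

noncomputable def cpP (n m : ℕ) : MvPolynomial (Fin n × Fin n) ℝ :=
  (Matrix.charpoly.univ ℝ (Fin n)).coeff (n - m)

lemma coeff_eq_eval (A : Matrix (Fin n) (Fin n) ℝ) :
    (Matrix.charpoly A).coeff (n - m) =
      MvPolynomial.eval (fun p : Fin n × Fin n => A p.1 p.2) (cpP n m) := by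
  have h := Matrix.charpoly.univ_coeff_eval₂Hom (Fin n) (RingHom.id ℝ)
    (fun p : Fin n × Fin n => A p.1 p.2) (n - m)
  have h2 : Matrix.of (Function.curry fun p : Fin n × Fin n => A p.1 p.2) = A := by
    ext i j; rfl
  rw [h2] at h
  rw [← h]
  rfl

lemma cpP_isHomogeneous (hmn : m ≤ n) : (cpP n m).IsHomogeneous m := by
  apply Matrix.charpoly.univ_coeff_isHomogeneous
  simp [Fintype.card_fin]
  omega

noncomputable def entriesL (n : ℕ) :
    Matrix (Fin n) (Fin n) ℝ →L[ℝ] ((Fin n × Fin n) → ℝ) :=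
  LinearMap.toContinuousLinearMap
    { toFun := fun A p => A p.1 p.2
      map_add' := fun A B => rfl
      map_smul' := fun c A => rfl }

lemma hm_analytic : AnalyticOnNhd ℝ (HmMat n m) Set.univ := by
  have h := AnalyticOnNhd.eval_continuousLinearMap (𝕜 := ℝ) (entriesL n) (cpP n m)
  intro x hx
  have : HmMat n m = fun A =>
      (((Nat.factorial m * Nat.factorial (n - m) : ℕ) : ℝ) / (Nat.factorial n : ℝ) * (-1 : ℝ) ^ m)
        * MvPolynomial.eval (entriesL n A) (cpP n m) := by
    funext A
    rw [HmMat, coeff_eq_eval (m := m) A]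
    ring_nf
    rfl
  rw [this]
  exact (analyticOnNhd_const (v := (((Nat.factorial m * Nat.factorial (n - m) : ℕ) : ℝ) /
    (Nat.factorial n : ℝ) * (-1 : ℝ) ^ m)) x hx).mul (h x hx)

lemma hm_contDiffAt {k : WithTop ℕ∞} (A : Matrix (Fin n) (Fin n) ℝ) :
    ContDiffAt ℝ k (HmMat n m) A :=
  (hm_analytic A trivial).contDiffAt

lemma hm_smul (hmn : m ≤ n) (r : ℝ) (A : Matrix (Fin n) (Fin n) ℝ) :
    HmMat n m (r • A) = r ^ m * HmMat n m A := by
  rw [HmMat, HmMat, coeff_eq_eval (m := m), coeff_eq_eval (m := m)]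
  have : (fun p : Fin n × Fin n => (r • A) p.1 p.2) = fun p => r * A p.1 p.2 := by
    funext p; simp [Matrix.smul_apply]
  rw [this, eval_smul_of_isHomogeneous _ m (cpP_isHomogeneous hmn)]
  ring

open Polynomial in
lemma charpoly_eigen {A : Matrix (Fin n) (Fin n) ℝ} (hH : A.IsHermitian) :
    A.charpoly = ∏ i, (X - C (hH.eigenvalues i)) := by
  have hU := Matrix.mem_unitaryGroup_iff.mp (hH.eigenvectorUnitary).2
  have h := charpoly_conj_aux (hH.eigenvectorUnitary : Matrix (Fin n) (Fin n) ℝ)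
    (star (hH.eigenvectorUnitary : Matrix (Fin n) (Fin n) ℝ))
    (Matrix.diagonal (RCLike.ofReal ∘ hH.eigenvalues)) hU
    (Matrix.mem_unitaryGroup_iff'.mp (hH.eigenvectorUnitary).2)
  rw [← Unitary.conjStarAlgAut_apply (S := ℝ), ← hH.spectral_theorem] at h
  rw [h]
  have : (RCLike.ofReal ∘ hH.eigenvalues : Fin n → ℝ) = hH.eigenvalues := by
    funext i; simp
  rw [this, charpoly_diagonal]

lemma trace_eq_sum_eigen {A : Matrix (Fin n) (Fin n) ℝ} (hH : A.IsHermitian) :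
    A.trace = ∑ i, hH.eigenvalues i := by
  conv_lhs => rw [hH.spectral_theorem, Unitary.conjStarAlgAut_apply]
  rw [Matrix.trace_mul_cycle, Matrix.mem_unitaryGroup_iff'.mp (hH.eigenvectorUnitary).2, one_mul, Matrix.trace_diagonal]
  simp

open Matrix in
lemma eigen_lower {A : Matrix (Fin n) (Fin n) ℝ} (hH : A.IsHermitian) {c : ℝ}
    (hq : ∀ x : Fin n → ℝ, 0 ≤ dotProduct x ((A - c • (1 : Matrix (Fin n) (Fin n) ℝ)) *ᵥ x))
    (i : Fin n) : c ≤ hH.eigenvalues i := by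
  set x : Fin n → ℝ := ⇑(hH.eigenvectorBasis i)
  have hx : dotProduct x x = 1 := by
    have h1 : ‖hH.eigenvectorBasis i‖ = 1 := hH.eigenvectorBasis.orthonormal.1 i
    have h2 : (inner ℝ (hH.eigenvectorBasis i) (hH.eigenvectorBasis i) : ℝ) = 1 := by
      rw [real_inner_self_eq_norm_mul_norm, h1]; norm_num
    rwa [EuclideanSpace.inner_eq_star_dotProduct, star_trivial] at h2
  have hmv : A *ᵥ x = hH.eigenvalues i • x := hH.mulVec_eigenvectorBasis i
  have h := hq x
  rw [Matrix.sub_mulVec, hmv, Matrix.smul_mulVec, Matrix.one_mulVec,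
    dotProduct_sub, dotProduct_smul, dotProduct_smul, hx] at h
  have hsm : (hH.eigenvalues i) • (1:ℝ) - c • (1:ℝ) = hH.eigenvalues i - c := by simp
  rw [hsm] at h
  linarith

lemma hm_pos_of_eigen_pos (hm1 : 1 ≤ m) (hmn : m ≤ n) {A : Matrix (Fin n) (Fin n) ℝ}
    (hH : A.IsHermitian) (hlam : ∀ i, 0 < hH.eigenvalues i) : 0 < HmMat n m A := by
  rw [HmMat]
  have hcard : (Finset.univ : Finset (Fin n)).card = n := by simp
  have hk : n - m ≤ (Finset.univ : Finset (Fin n)).card := by omega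
  have hcoeff : (A.charpoly).coeff (n - m) =
      ∑ t ∈ Finset.powersetCard m Finset.univ, (-1 : ℝ) ^ m * ∏ i ∈ t, hH.eigenvalues i := by
    rw [charpoly_eigen hH]
    have : ∀ i : Fin n, (Polynomial.X - Polynomial.C (hH.eigenvalues i)) =
        (Polynomial.X + Polynomial.C (-(hH.eigenvalues i))) := by intro i; simp [sub_eq_add_neg]
    simp_rw [this]
    rw [Finset.prod_X_add_C_coeff _ _ hk, hcard]
    have h2 : n - (n - m) = m := by omega
    rw [h2]
    apply Finset.sum_congr rfl
    intro t ht
    have htc : t.card = m := (Finset.mem_powersetCard.mp ht).2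
    calc (∏ i ∈ t, -hH.eigenvalues i) = ∏ i ∈ t, (-1) * hH.eigenvalues i := by
          simp [neg_one_mul]
      _ = (-1 : ℝ) ^ m * ∏ i ∈ t, hH.eigenvalues i := by
          rw [Finset.prod_mul_distrib, Finset.prod_const, htc]
  rw [hcoeff, Finset.mul_sum]
  have : ∀ t ∈ Finset.powersetCard m (Finset.univ : Finset (Fin n)),
      (-1 : ℝ) ^ m * ((-1 : ℝ) ^ m * ∏ i ∈ t, hH.eigenvalues i) = ∏ i ∈ t, hH.eigenvalues i := by
    intro t _
    rw [← mul_assoc, ← pow_add, Even.neg_one_pow ⟨m, by ring⟩, one_mul]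
  rw [Finset.sum_congr rfl this]
  apply mul_pos
  · apply div_pos
    · exact_mod_cast Nat.cast_pos.mpr (Nat.mul_pos (Nat.factorial_pos m) (Nat.factorial_pos (n - m)))
    · exact_mod_cast Nat.cast_pos.mpr (Nat.factorial_pos n)
  · apply Finset.sum_pos
    · intro t _
      exact Finset.prod_pos fun i _ => hlam i
    · exact Finset.powersetCard_nonempty.mpr (by omega)

lemma isSymm_hermitian {A : Matrix (Fin n) (Fin n) ℝ} (h : A.IsSymm) : A.IsHermitian := by
  rw [Matrix.IsHermitian, Matrix.conjTranspose_eq_transpose_of_trivial]; exact h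

set_option maxHeartbeats 1000000 in
/-- Let `σ̂(A) = Ĥ_m(A)^β` with `β > 1/m`.  For every `ε ∈ (0, 1/n]` there exists
`M₂ = M₂(n,m,β,ε) > 0` such that for every real symmetric `n×n` matrix `A` with
`tr A > 0` and `A − ε·(tr A)·I` positive semidefinite, `σ̂` is twice (continuously)
Fréchet differentiable at `A` and `|D²σ̂(A)[B,B]| ≤ M₂·‖A‖^(mβ−2)·‖B‖²` for every
matrix `B`, where `‖·‖` is the Frobenius norm. -/
theorem stmt9 (n m : ℕ) (β : ℝ) (hn : 2 ≤ n) (hm1 : 1 ≤ m) (hmn : m ≤ n)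
    (hβ : 1 / (m : ℝ) < β) (ε : ℝ) (hε1 : 0 < ε) (hε2 : ε ≤ 1 / n) :
    ∃ M₂ > (0 : ℝ), ∀ A : Matrix (Fin n) (Fin n) ℝ, A.IsSymm → 0 < A.trace →
      (A - (ε * A.trace) • (1 : Matrix (Fin n) (Fin n) ℝ)).PosSemidef →
      ContDiffAt ℝ 2 (fun X : Matrix (Fin n) (Fin n) ℝ => HmMat n m X ^ β) A ∧
      ∀ B : Matrix (Fin n) (Fin n) ℝ,
        |iteratedFDeriv ℝ 2 (fun X : Matrix (Fin n) (Fin n) ℝ => HmMat n m X ^ β) A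
            (fun _ => B)| ≤
          M₂ * ‖A‖ ^ ((m : ℝ) * β - 2) * ‖B‖ ^ 2 := by
  classical
  set f : Matrix (Fin n) (Fin n) ℝ → ℝ := fun X => HmMat n m X ^ β with hf_def
  set U : Set (Matrix (Fin n) (Fin n) ℝ) := {A | 0 < HmMat n m A} with hU_def
  have hHmCont : Continuous (HmMat n m (A := ·)) :=
    continuous_iff_continuousAt.mpr fun x => (hm_contDiffAt (k := 0) x).continuousAt
  have hUopen : IsOpen U := isOpen_lt continuous_const hHmCont
  have hUD : UniqueDiffOn ℝ U := hUopen.uniqueDiffOn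
  have hfC : ContDiffOn ℝ ((2 : ℕ) : WithTop ℕ∞) f U := by
    intro x hx
    exact (((Real.contDiffAt_rpow_const_of_ne (ne_of_gt hx)).comp x
      (hm_contDiffAt x))).contDiffWithinAt
  set S : Set (Matrix (Fin n) (Fin n) ℝ) := {A | A.IsSymm ∧
      (∀ x : Fin n → ℝ, 0 ≤ dotProduct x
        (Matrix.mulVec (A - (ε * A.trace) • (1 : Matrix (Fin n) (Fin n) ℝ)) x)) ∧
      0 ≤ A.trace} ∩ Metric.sphere 0 1 with hS_def
  have hentry : ∀ p : Fin n × Fin n,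
      Continuous (fun A : Matrix (Fin n) (Fin n) ℝ => A p.1 p.2) := fun p =>
    (continuous_apply p).comp (entriesL n).continuous
  have htrc : Continuous (fun A : Matrix (Fin n) (Fin n) ℝ => A.trace) := by
    have : (fun A : Matrix (Fin n) (Fin n) ℝ => A.trace)
        = fun A : Matrix (Fin n) (Fin n) ℝ => ∑ i, A i i := by
      funext A; rfl
    rw [this]
    exact continuous_finset_sum _ fun i _ => hentry (i, i)
  have htransL : Continuous (fun A : Matrix (Fin n) (Fin n) ℝ => A.transpose) :=
    (LinearMap.toContinuousLinearMap
      ({ toFun := fun A : Matrix (Fin n) (Fin n) ℝ => A.transpose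
         map_add' := fun _ _ => rfl
         map_smul' := fun _ _ => rfl } :
        Matrix (Fin n) (Fin n) ℝ →ₗ[ℝ] Matrix (Fin n) (Fin n) ℝ)).continuous
  have hqc : ∀ x : Fin n → ℝ, Continuous (fun A : Matrix (Fin n) (Fin n) ℝ =>
      dotProduct x (Matrix.mulVec (A - (ε * A.trace) • (1 : Matrix (Fin n) (Fin n) ℝ)) x)) := by
    intro x
    have hrw : (fun A : Matrix (Fin n) (Fin n) ℝ =>
        dotProduct x (Matrix.mulVec (A - (ε * A.trace) • (1 : Matrix (Fin n) (Fin n) ℝ)) x))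
        = fun A : Matrix (Fin n) (Fin n) ℝ =>
          ∑ i, x i * ∑ j, (A i j - (ε * A.trace) * (1 : Matrix (Fin n) (Fin n) ℝ) i j) * x j := by
      funext A
      simp [dotProduct, Matrix.mulVec, Matrix.sub_apply, Matrix.smul_apply, smul_eq_mul]
    rw [hrw]
    apply continuous_finset_sum
    intro i _
    apply Continuous.mul continuous_const
    apply continuous_finset_sum
    intro j _
    exact ((hentry (i, j)).sub ((continuous_const.mul htrc).mul continuous_const)).mul
      continuous_const
  have hScl : IsClosed S := by
    apply IsClosed.inter _ Metric.isClosed_sphere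
    have hrw : {A : Matrix (Fin n) (Fin n) ℝ | A.IsSymm ∧
        (∀ x : Fin n → ℝ, 0 ≤ dotProduct x
          (Matrix.mulVec (A - (ε * A.trace) • (1 : Matrix (Fin n) (Fin n) ℝ)) x)) ∧
        0 ≤ A.trace} =
        {A : Matrix (Fin n) (Fin n) ℝ | A.IsSymm} ∩
        ({A : Matrix (Fin n) (Fin n) ℝ | ∀ x : Fin n → ℝ, 0 ≤ dotProduct x
          (Matrix.mulVec (A - (ε * A.trace) • (1 : Matrix (Fin n) (Fin n) ℝ)) x)} ∩
         {A : Matrix (Fin n) (Fin n) ℝ | 0 ≤ A.trace}) := rfl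
    rw [hrw]
    refine IsClosed.inter ?_ (IsClosed.inter ?_ ?_)
    · exact isClosed_eq htransL continuous_id
    · have hrw2 : {A : Matrix (Fin n) (Fin n) ℝ | ∀ x : Fin n → ℝ, 0 ≤ dotProduct x
          (Matrix.mulVec (A - (ε * A.trace) • (1 : Matrix (Fin n) (Fin n) ℝ)) x)} =
          ⋂ x : Fin n → ℝ, {A : Matrix (Fin n) (Fin n) ℝ | 0 ≤ dotProduct x
          (Matrix.mulVec (A - (ε * A.trace) • (1 : Matrix (Fin n) (Fin n) ℝ)) x)} := by
        ext A; simp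
      rw [hrw2]
      exact isClosed_iInter fun x => isClosed_le continuous_const (hqc x)
    · exact isClosed_le continuous_const htrc
  have hScomp : IsCompact S := (isCompact_sphere (0 : Matrix (Fin n) (Fin n) ℝ) 1).of_isClosed_subset
    hScl Set.inter_subset_right
  have hSU : S ⊆ U := by
    rintro A ⟨⟨hsym, hquad, htr0⟩, hsp⟩
    have hnormA : ‖A‖ = 1 := by rwa [mem_sphere_zero_iff_norm] at hsp
    have hH := isSymm_hermitian hsym
    have hev : ∀ i, ε * A.trace ≤ hH.eigenvalues i := fun i => eigen_lower hH hquad i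
    have htrpos : 0 < A.trace := by
      rcases lt_or_eq_of_le htr0 with h | h
      · exact h
      · exfalso
        have hev0 : ∀ i, 0 ≤ hH.eigenvalues i := fun i => by
          have := hev i; nlinarith
        have hsum : ∑ i, hH.eigenvalues i = 0 := by
          rw [← trace_eq_sum_eigen hH, ← h]
        have hzero : ∀ i ∈ Finset.univ, hH.eigenvalues i = 0 := fun i _ =>
          (Finset.sum_eq_zero_iff_of_nonneg (fun i _ => hev0 i)).mp hsum i (Finset.mem_univ i)
        have hA0 : A = 0 := by
          have hd : Matrix.diagonal (RCLike.ofReal ∘ hH.eigenvalues)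
              = (0 : Matrix (Fin n) (Fin n) ℝ) := by
            have : (RCLike.ofReal ∘ hH.eigenvalues : Fin n → ℝ) = fun _ => 0 := by
              funext i; simp [hzero i (Finset.mem_univ i)]
            rw [this, Matrix.diagonal_zero]
          rw [hH.spectral_theorem, Unitary.conjStarAlgAut_apply, hd, Matrix.mul_zero, Matrix.zero_mul]
        rw [hA0] at hnormA
        simp at hnormA
    exact hm_pos_of_eigen_pos hm1 hmn hH fun i =>
      lt_of_lt_of_le (mul_pos hε1 htrpos) (hev i)
  set D2 := fun x : Matrix (Fin n) (Fin n) ℝ => iteratedFDerivWithin ℝ 2 f U x with hD2_def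
  have hD2cont : ContinuousOn D2 U :=
    hfC.continuousOn_iteratedFDerivWithin (by exact_mod_cast le_rfl) hUD
  obtain ⟨C, hC⟩ : ∃ C, ∀ x ∈ S, ‖D2 x‖ ≤ C :=
    hScomp.exists_bound_of_continuousOn (hD2cont.mono hSU)
  refine ⟨max C 0 + 1, by positivity, ?_⟩
  intro A hsymA htrA hpsd
  have hquadA : ∀ x : Fin n → ℝ,
      0 ≤ dotProduct x
        (Matrix.mulVec (A - (ε * A.trace) • (1 : Matrix (Fin n) (Fin n) ℝ)) x) := fun x => by
    simpa [star_trivial] using hpsd.dotProduct_mulVec_nonneg x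
  have hH := isSymm_hermitian hsymA
  have hev : ∀ i, ε * A.trace ≤ hH.eigenvalues i := fun i => eigen_lower hH hquadA i
  have hAU : A ∈ U := hm_pos_of_eigen_pos hm1 hmn hH fun i =>
    lt_of_lt_of_le (mul_pos hε1 htrA) (hev i)
  have hfCA : ContDiffAt ℝ 2 f A :=
    (Real.contDiffAt_rpow_const_of_ne (ne_of_gt hAU)).comp A (hm_contDiffAt A)
  refine ⟨hfCA, ?_⟩
  intro B
  have hA0 : A ≠ 0 := by
    intro h
    rw [h] at htrA
    simp [Matrix.trace_zero] at htrA
  have hr : 0 < ‖A‖ := norm_pos_iff.mpr hA0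
  set r : ℝ := ‖A‖ with hr_def
  set Ah : Matrix (Fin n) (Fin n) ℝ := r⁻¹ • A with hAh_def
  have hAhS : Ah ∈ S := by
    constructor
    · refine ⟨?_, ?_, ?_⟩
      · rw [Matrix.IsSymm] at hsymA ⊢
        rw [hAh_def, Matrix.transpose_smul, hsymA]
      · intro x
        have htrAh : Ah.trace = r⁻¹ * A.trace := by
          rw [hAh_def, Matrix.trace_smul]; simp
        have hmatr : Ah - (ε * Ah.trace) • (1 : Matrix (Fin n) (Fin n) ℝ) =
            r⁻¹ • (A - (ε * A.trace) • (1 : Matrix (Fin n) (Fin n) ℝ)) := by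
          rw [htrAh, hAh_def, smul_sub, smul_smul]
          congr 2
          ring
        rw [hmatr, Matrix.smul_mulVec, dotProduct_smul, smul_eq_mul]
        have := hquadA x
        have hrinv : (0:ℝ) ≤ r⁻¹ := by positivity
        nlinarith
      · rw [hAh_def, Matrix.trace_smul]
        simp only [smul_eq_mul]
        positivity
    · rw [mem_sphere_zero_iff_norm, hAh_def, norm_smul]
      rw [norm_inv, Real.norm_eq_abs, abs_of_pos hr]
      field_simp
      rfl
  have hAhU : Ah ∈ U := hSU hAhS
  set g : @ContinuousLinearMap ℝ ℝ _ _ (RingHom.id ℝ) (Matrix (Fin n) (Fin n) ℝ)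
      PseudoMetricSpace.toUniformSpace.toTopologicalSpace Matrix.frobeniusNormedAddCommGroup.toAddCommMonoid (Matrix (Fin n) (Fin n) ℝ)
      PseudoMetricSpace.toUniformSpace.toTopologicalSpace Matrix.frobeniusNormedAddCommGroup.toAddCommMonoid NormedSpace.toModule NormedSpace.toModule :=
    r • ContinuousLinearMap.id ℝ (Matrix (Fin n) (Fin n) ℝ) with hg_def
  have hgapp : ∀ x : Matrix (Fin n) (Fin n) ℝ, g x = r • x := fun x => rfl
  have hrm : (0:ℝ) < r ^ m := pow_pos hr m
  have hgU : g ⁻¹' U = U := by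
    ext x
    simp only [Set.mem_preimage, hU_def, Set.mem_setOf_eq, hgapp, hm_smul hmn]
    constructor
    · intro h; nlinarith
    · intro h; nlinarith
  have hgAh : g Ah = A := by
    rw [hgapp, hAh_def, smul_inv_smul₀ (ne_of_gt hr)]
  have hcomp := ContinuousLinearMap.iteratedFDerivWithin_comp_right (f := f) g hfC hUD
    (by rw [hgU]; exact hUD) (x := Ah) (by rw [hgAh]; exact hAU) (i := 2) le_rfl
  rw [hgU, hgAh] at hcomp
  have heqOn : Set.EqOn (f ∘ g) ((r ^ ((m:ℝ) * β)) • f) U := by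
    intro x hx
    simp only [Function.comp_apply, Pi.smul_apply, smul_eq_mul, hgapp, hf_def]
    rw [hm_smul hmn, Real.mul_rpow (le_of_lt hrm) (le_of_lt hx),
      ← Real.rpow_natCast r m, ← Real.rpow_mul hr.le]
  have hLHS : iteratedFDerivWithin ℝ 2 (f ∘ g) U Ah =
      (r ^ ((m:ℝ) * β)) • iteratedFDerivWithin ℝ 2 f U Ah := by
    rw [iteratedFDerivWithin_congr heqOn hAhU 2]
    exact iteratedFDerivWithin_const_smul_apply (hfC Ah hAhU) hUD hAhU
  rw [hLHS] at hcomp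
  have happ := congrArg (fun F => F (fun _ : Fin 2 => B)) hcomp
  simp only [ContinuousMultilinearMap.smul_apply,
    ContinuousMultilinearMap.compContinuousLinearMap_apply, smul_eq_mul] at happ
  have happ2 : r ^ ((m:ℝ) * β) * iteratedFDerivWithin ℝ 2 f U Ah (fun _ => B) =
      r ^ 2 * iteratedFDerivWithin ℝ 2 f U A (fun _ => B) := by
    rw [happ]
    have hfunB : (fun _ : Fin 2 => g B)
        = fun i : Fin 2 => (fun _ : Fin 2 => r) i • (fun _ : Fin 2 => B) i := by
      funext i; rw [hgapp]
    rw [hfunB, ContinuousMultilinearMap.map_smul_univ]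
    simp [smul_eq_mul]
  have hwithinA : iteratedFDerivWithin ℝ 2 f U A = iteratedFDeriv ℝ 2 f A :=
    iteratedFDerivWithin_of_isOpen 2 hUopen hAU
  have hkey : iteratedFDeriv ℝ 2 f A (fun _ => B) =
      r ^ ((m:ℝ) * β - 2) * iteratedFDerivWithin ℝ 2 f U Ah (fun _ => B) := by
    rw [← hwithinA]
    have hsplit : r ^ ((m:ℝ) * β - 2) * r ^ (2:ℕ) = r ^ ((m:ℝ) * β) := by
      rw [← Real.rpow_natCast r 2, ← Real.rpow_add hr]
      norm_num
    have h2 : (0:ℝ) < r ^ 2 := by positivity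
    have hne : (r:ℝ) ^ 2 ≠ 0 := ne_of_gt h2
    calc iteratedFDerivWithin ℝ 2 f U A (fun _ => B)
        = (r ^ 2 * iteratedFDerivWithin ℝ 2 f U A (fun _ => B)) / r ^ 2 := by
          field_simp
      _ = (r ^ ((m:ℝ) * β) * iteratedFDerivWithin ℝ 2 f U Ah (fun _ => B)) / r ^ 2 := by
          rw [← happ2]
      _ = (r ^ ((m:ℝ) * β - 2) * r ^ (2:ℕ) * iteratedFDerivWithin ℝ 2 f U Ah (fun _ => B)) / r ^ 2 := by
          rw [hsplit]
      _ = r ^ ((m:ℝ) * β - 2) * iteratedFDerivWithin ℝ 2 f U Ah (fun _ => B) := by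
          field_simp
  rw [hkey, abs_mul, abs_of_nonneg (Real.rpow_nonneg hr.le ((m:ℝ) * β - 2))]
  have hbound : |iteratedFDerivWithin ℝ 2 f U Ah (fun _ => B)| ≤ (max C 0 + 1) * ‖B‖ ^ 2 := by
    rw [← Real.norm_eq_abs]
    calc ‖iteratedFDerivWithin ℝ 2 f U Ah (fun _ : Fin 2 => B)‖
        ≤ ‖iteratedFDerivWithin ℝ 2 f U Ah‖ * ∏ _i : Fin 2, ‖B‖ :=
          ContinuousMultilinearMap.le_opNorm _ _
      _ = ‖D2 Ah‖ * ‖B‖ ^ 2 := by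
          rw [hD2_def, Finset.prod_const]
          norm_num
      _ ≤ (max C 0 + 1) * ‖B‖ ^ 2 := by
          have h1 : ‖D2 Ah‖ ≤ C := hC Ah hAhS
          have h2 : C ≤ max C 0 + 1 := le_trans (le_max_left _ _) (by linarith)
          nlinarith [norm_nonneg B, sq_nonneg ‖B‖, norm_nonneg (D2 Ah)]
  calc r ^ ((m:ℝ) * β - 2) * |iteratedFDerivWithin ℝ 2 f U Ah (fun _ => B)|
      ≤ r ^ ((m:ℝ) * β - 2) * ((max C 0 + 1) * ‖B‖ ^ 2) := by
        apply mul_le_mul_of_nonneg_left hbound (Real.rpow_nonneg hr.le _)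
    _ = (max C 0 + 1) * ‖A‖ ^ ((m:ℝ) * β - 2) * ‖B‖ ^ 2 := by rw [hr_def]; ring
end

section
/- Let n ≥ 2, m ∈ {1,…,n}, 0 < H₀ ≤ H₁, and ε ∈ (0, 1/n]. Let φ(k) = H_m(k)^{1/m} on the open positive cone Γ₊, and let 𝒞 = {k ∈ ℝ^n : H₀ ≤ H(k) ≤ H₁ and k_i ≥ ε·H(k) for all i}, a compact subset of Γ₊. Define φ̃ : ℝ^n → ℝ by φ̃(k) = min_{h ∈ 𝒞} Σ_i ∂φ/∂k_i(h)·k_i (the minimum is attained since 𝒞 is compact). Then: (i) φ̃ is concave on ℝ^n; (ii) φ̃ is positively homogeneous of degree one, i.e. φ̃(λk) = λ·φ̃(k) for all λ > 0 and k ∈ ℝ^n; and (iii) φ̃(k) = φ(k) for every k ∈ 𝒞. -/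
set_option linter.unusedSectionVars false
set_option maxHeartbeats 1000000
open Finset Pointwise

section EsTheory
variable {ι : Type*} [DecidableEq ι]

/-- Elementary symmetric polynomial over a finset. -/
noncomputable def es (r : ℕ) (S : Finset ι) (x : ι → ℝ) : ℝ :=
  ∑ t ∈ Finset.powersetCard r S, ∏ i ∈ t, x i

lemma es_zero (S : Finset ι) (x : ι → ℝ) : es 0 S x = 1 := by
  simp [es]

lemma es_one (S : Finset ι) (x : ι → ℝ) : es 1 S x = ∑ i ∈ S, x i := by
  simp [es, Finset.powersetCard_one, Finset.sum_map]

lemma es_pos {r : ℕ} {S : Finset ι} {x : ι → ℝ} (hr : r ≤ S.card)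
    (hx : ∀ i ∈ S, 0 < x i) : 0 < es r S x := by
  apply Finset.sum_pos
  · intro t ht
    rw [Finset.mem_powersetCard] at ht
    exact Finset.prod_pos fun i hi => hx i (ht.1 hi)
  · exact Finset.powersetCard_nonempty.2 hr

lemma es_nonneg {r : ℕ} {S : Finset ι} {x : ι → ℝ}
    (hx : ∀ i ∈ S, 0 ≤ x i) : 0 ≤ es r S x := by
  apply Finset.sum_nonneg
  intro t ht
  rw [Finset.mem_powersetCard] at ht
  exact Finset.prod_nonneg fun i hi => hx i (ht.1 hi)

/-- The filtered-sum bijection lemma. -/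
lemma sum_filter_mem_powersetCard (r : ℕ) {S : Finset ι} {i : ι} (hi : i ∈ S) (x : ι → ℝ) :
    ∑ t ∈ (Finset.powersetCard (r+1) S).filter (fun t => i ∈ t), ∏ j ∈ t, x j
      = x i * es r (S.erase i) x := by
  rw [es, Finset.mul_sum]
  refine Finset.sum_nbij' (fun t => t.erase i) (fun u => insert i u) ?_ ?_ ?_ ?_ ?_
  · intro t ht
    simp only [Finset.mem_filter, Finset.mem_powersetCard] at ht
    rw [Finset.mem_powersetCard]
    constructor
    · intro j hj
      rw [Finset.mem_erase] at hj ⊢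
      exact ⟨hj.1, ht.1.1 hj.2⟩
    · rw [Finset.card_erase_of_mem ht.2, ht.1.2]; rfl
  · intro u hu
    rw [Finset.mem_powersetCard] at hu
    have hiu : i ∉ u := fun h => (Finset.mem_erase.1 (hu.1 h)).1 rfl
    simp only [Finset.mem_filter, Finset.mem_powersetCard]
    refine ⟨⟨?_, ?_⟩, Finset.mem_insert_self _ _⟩
    · intro j hj
      rcases Finset.mem_insert.1 hj with h | h
      · exact h ▸ hi
      · exact Finset.mem_of_mem_erase (hu.1 h)
    · rw [Finset.card_insert_of_notMem hiu, hu.2]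
  · intro t ht
    simp only [Finset.mem_filter] at ht
    exact Finset.insert_erase ht.2
  · intro u hu
    rw [Finset.mem_powersetCard] at hu
    have hiu : i ∉ u := fun h => (Finset.mem_erase.1 (hu.1 h)).1 rfl
    exact Finset.erase_insert hiu
  · intro t ht
    simp only [Finset.mem_filter] at ht
    rw [← Finset.mul_prod_erase t x ht.2]

/-- Splitting off one variable. -/
lemma es_split {r : ℕ} {S : Finset ι} {i : ι} (hi : i ∈ S) (x : ι → ℝ) :
    es (r+1) S x = es (r+1) (S.erase i) x + x i * es r (S.erase i) x := by
  classical
  rw [← sum_filter_mem_powersetCard r hi x, es]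
  rw [← Finset.sum_filter_add_sum_filter_not (Finset.powersetCard (r+1) S) (fun t => i ∈ t)]
  rw [add_comm]
  congr 1
  rw [es]
  congr 1
  ext t
  simp only [Finset.mem_filter, Finset.mem_powersetCard, Finset.subset_erase]
  tauto

/-- Euler's identity for elementary symmetric polynomials. -/
lemma es_euler (r : ℕ) (S : Finset ι) (x : ι → ℝ) :
    ∑ i ∈ S, x i * es r (S.erase i) x = (r+1) * es (r+1) S x := by
  classical
  have : ∀ i ∈ S, x i * es r (S.erase i) x
      = ∑ t ∈ (Finset.powersetCard (r+1) S).filter (fun t => i ∈ t), ∏ j ∈ t, x j :=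
    fun i hi => (sum_filter_mem_powersetCard r hi x).symm
  rw [Finset.sum_congr rfl this]
  simp only [Finset.sum_filter]
  rw [Finset.sum_comm]
  rw [es, Finset.mul_sum]
  refine Finset.sum_congr rfl fun t ht => ?_
  rw [Finset.mem_powersetCard] at ht
  rw [Finset.sum_ite_mem, Finset.inter_eq_right.2 ht.1, Finset.sum_const, ht.2]
  simp [nsmul_eq_mul]

lemma engel {a b u v : ℝ} (ha : 0 < a) (hb : 0 < b) (hu : 0 < u) (hv : 0 < v) :
    (a+b)^2/((a+b)+(u+v)) ≤ a^2/(a+u) + b^2/(b+v) := by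
  rw [div_add_div _ _ (by positivity) (by positivity), div_le_div_iff₀ (by positivity) (by positivity)]
  nlinarith [sq_nonneg (a*v - b*u), mul_pos ha hv, mul_pos hb hu, mul_pos hu hv, mul_pos ha hb]

/-- The key identity: `(r+2) * es_{r+2}/es_{r+1} = ∑_{i∈S} (x i - x i ^ 2 / (x i + G i))`. -/
lemma es_ratio_formula (r : ℕ) (S : Finset ι) (x : ι → ℝ)
    (hcard : r + 2 ≤ S.card) (hx : ∀ i ∈ S, 0 < x i) :
    ((r:ℝ)+2) * (es (r+2) S x / es (r+1) S x) =
      ∑ i ∈ S, (x i - (x i)^2 / (x i + es (r+1) (S.erase i) x / es r (S.erase i) x)) := by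
  have hEr1 : 0 < es (r+1) S x := es_pos (by omega) hx
  have herase : ∀ i ∈ S, r + 1 ≤ (S.erase i).card := by
    intro i hi; rw [Finset.card_erase_of_mem hi]; omega
  have heul := es_euler (r+1) S x
  have hterm : ∀ i ∈ S, x i * es (r+1) (S.erase i) x
      = x i * es (r+1) S x - (x i)^2 * es r (S.erase i) x := by
    intro i hi
    have h := es_split (r := r) (i := i) hi x
    rw [h]; ring
  rw [Finset.sum_congr rfl hterm] at heul
  have hA : ((r:ℝ)+2) * es (r+2) S x
      = ∑ i ∈ S, (x i * es (r+1) S x - (x i)^2 * es r (S.erase i) x) := by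
    rw [heul]; push_cast; ring_nf
  calc ((r:ℝ)+2) * (es (r+2) S x / es (r+1) S x)
      = (∑ i ∈ S, (x i * es (r+1) S x - (x i)^2 * es r (S.erase i) x)) / es (r+1) S x := by
        rw [← mul_div_assoc, hA]
    _ = ∑ i ∈ S, (x i - (x i)^2 / (x i + es (r+1) (S.erase i) x / es r (S.erase i) x)) := by
        rw [Finset.sum_div]
        refine Finset.sum_congr rfl fun i hi => ?_
        have hg : 0 < es r (S.erase i) x := es_pos (by have := herase i hi; omega)
          (fun j hj => hx j (Finset.mem_of_mem_erase hj))
        have hsplit := es_split (r := r) (i := i) hi x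
        have hG : 0 < es (r+1) (S.erase i) x / es r (S.erase i) x :=
          div_pos (es_pos (herase i hi) (fun j hj => hx j (Finset.mem_of_mem_erase hj))) hg
        rw [sub_div, mul_div_cancel_right₀ _ (ne_of_gt hEr1)]
        congr 1
        have hxi := hx i hi
        have hd : 0 < x i + es (r+1) (S.erase i) x / es r (S.erase i) x := by linarith
        rw [div_eq_div_iff (ne_of_gt hEr1) (ne_of_gt hd)]
        rw [hsplit]
        field_simp
        ring

/-- Marcus–Lopes: superadditivity of `es_{r+1}/es_r` on the positive cone. -/
theorem ML : ∀ (r : ℕ) (S : Finset ι) (x y : ι → ℝ), r + 1 ≤ S.card →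
    (∀ i ∈ S, 0 < x i) → (∀ i ∈ S, 0 < y i) →
    es (r+1) S x / es r S x + es (r+1) S y / es r S y
      ≤ es (r+1) S (x+y) / es r S (x+y) := by
  intro r
  induction r with
  | zero =>
    intro S x y hc hx hy
    simp only [zero_add, es_one, es_zero, div_one, ← Finset.sum_add_distrib]
    exact le_of_eq (Finset.sum_congr rfl fun i _ => rfl)
  | succ r ih =>
    intro S x y hc hx hy
    have hz : ∀ i ∈ S, 0 < (x+y) i := fun i hi => add_pos (hx i hi) (hy i hi)
    have hR : (0:ℝ) < (r:ℝ)+2 := by positivity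
    rw [← mul_le_mul_iff_right₀ hR, mul_add]
    have e1 := es_ratio_formula r S x hc hx
    have e2 := es_ratio_formula r S y hc hy
    have e3 := es_ratio_formula r S (x+y) hc hz
    rw [e1, e2, e3, ← Finset.sum_add_distrib]
    refine Finset.sum_le_sum fun i hi => ?_
    have hxe : ∀ j ∈ S.erase i, 0 < x j := fun j hj => hx j (Finset.mem_of_mem_erase hj)
    have hye : ∀ j ∈ S.erase i, 0 < y j := fun j hj => hy j (Finset.mem_of_mem_erase hj)
    have hce : r + 1 ≤ (S.erase i).card := by rw [Finset.card_erase_of_mem hi]; omega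
    have hGx : 0 < es (r+1) (S.erase i) x / es r (S.erase i) x :=
      div_pos (es_pos hce hxe) (es_pos (by omega) hxe)
    have hGy : 0 < es (r+1) (S.erase i) y / es r (S.erase i) y :=
      div_pos (es_pos hce hye) (es_pos (by omega) hye)
    have hIH := ih (S.erase i) x y hce hxe hye
    have hxi := hx i hi
    have hyi := hy i hi
    have step1 : (x i + y i)^2 / ((x i + y i) + es (r+1) (S.erase i) (x+y) / es r (S.erase i) (x+y))
        ≤ (x i + y i)^2 / ((x i + y i) + (es (r+1) (S.erase i) x / es r (S.erase i) x
            + es (r+1) (S.erase i) y / es r (S.erase i) y)) := by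
      apply div_le_div_of_nonneg_left (by positivity) (by positivity)
      linarith [hIH]
    have step2 := engel hxi hyi hGx hGy
    simp only [Pi.add_apply]
    linarith [step1, step2]

section Root
variable {ι : Type*} [DecidableEq ι]

lemma es_eq_prod_ratio {S : Finset ι} {x : ι → ℝ} (hx : ∀ i ∈ S, 0 < x i) :
    ∀ m : ℕ, m ≤ S.card → es m S x = ∏ r ∈ Finset.range m, (es (r+1) S x / es r S x) := by
  intro m
  induction m with
  | zero => intro _; simp [es_zero]
  | succ m ih =>
    intro hm
    rw [Finset.prod_range_succ, ← ih (by omega), mul_comm,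
      div_mul_cancel₀ _ (ne_of_gt (es_pos (by omega) hx))]

lemma gm_superadd {m : ℕ} (hm : m ≠ 0) {a b : ℕ → ℝ}
    (ha : ∀ r ∈ Finset.range m, 0 < a r) (hb : ∀ r ∈ Finset.range m, 0 < b r) :
    (∏ r ∈ Finset.range m, a r) ^ ((1:ℝ)/m) + (∏ r ∈ Finset.range m, b r) ^ ((1:ℝ)/m)
      ≤ (∏ r ∈ Finset.range m, (a r + b r)) ^ ((1:ℝ)/m) := by
  have hw : ∀ r ∈ Finset.range m, (0:ℝ) ≤ 1/m := fun _ _ => by positivity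
  have hwsum : ∑ _r ∈ Finset.range m, (1:ℝ)/m = 1 := by
    rw [Finset.sum_const, Finset.card_range, nsmul_eq_mul]
    field_simp
  have hab : ∀ r ∈ Finset.range m, 0 < a r + b r := fun r hr => add_pos (ha r hr) (hb r hr)
  have hC : (0:ℝ) < (∏ r ∈ Finset.range m, (a r + b r)) ^ ((1:ℝ)/m) :=
    Real.rpow_pos_of_pos (Finset.prod_pos hab) _
  rw [← div_le_one hC, add_div]
  have key : ∀ c : ℕ → ℝ, (∀ r ∈ Finset.range m, 0 < c r) →
      (∀ r ∈ Finset.range m, c r ≤ a r + b r) →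
      (∏ r ∈ Finset.range m, c r) ^ ((1:ℝ)/m) / (∏ r ∈ Finset.range m, (a r + b r)) ^ ((1:ℝ)/m)
        ≤ ∑ r ∈ Finset.range m, (1:ℝ)/m * (c r / (a r + b r)) := by
    intro c hc hcle
    have h1 : (∏ r ∈ Finset.range m, c r) ^ ((1:ℝ)/m) / (∏ r ∈ Finset.range m, (a r + b r)) ^ ((1:ℝ)/m)
        = ∏ r ∈ Finset.range m, (c r / (a r + b r)) ^ ((1:ℝ)/m) := by
      rw [Real.finset_prod_rpow _ _ (fun r hr => div_nonneg (hc r hr).le (hab r hr).le) _]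
      rw [← Real.div_rpow (Finset.prod_nonneg fun r hr => (hc r hr).le)
        (Finset.prod_nonneg fun r hr => (hab r hr).le)]
      rw [Finset.prod_div_distrib]
    rw [h1]
    exact Real.geom_mean_le_arith_mean_weighted _ _ _ hw hwsum
      (fun r hr => div_nonneg (hc r hr).le (hab r hr).le)
  have hA := key a ha (fun r hr => by linarith [hb r hr])
  have hB := key b hb (fun r hr => by linarith [ha r hr])
  have : ∑ r ∈ Finset.range m, (1:ℝ)/m * (a r / (a r + b r))
      + ∑ r ∈ Finset.range m, (1:ℝ)/m * (b r / (a r + b r)) = 1 := by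
    rw [← Finset.sum_add_distrib, ← hwsum]
    refine Finset.sum_congr rfl fun r hr => ?_
    have := hab r hr
    rw [← mul_add, ← add_div, div_self this.ne', mul_one]
    rw [hwsum]
  linarith

/-- Superadditivity of `es_m^{1/m}` (Marcus–Lopes / Gårding). -/
theorem es_root_superadd {S : Finset ι} {x y : ι → ℝ} {m : ℕ} (hm : 1 ≤ m) (hmc : m ≤ S.card)
    (hx : ∀ i ∈ S, 0 < x i) (hy : ∀ i ∈ S, 0 < y i) :
    es m S x ^ ((1:ℝ)/m) + es m S y ^ ((1:ℝ)/m) ≤ es m S (x+y) ^ ((1:ℝ)/m) := by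
  have hz : ∀ i ∈ S, 0 < (x+y) i := fun i hi => add_pos (hx i hi) (hy i hi)
  rw [es_eq_prod_ratio hx m hmc, es_eq_prod_ratio hy m hmc, es_eq_prod_ratio hz m hmc]
  set a : ℕ → ℝ := fun r => es (r+1) S x / es r S x with ha_def
  set b : ℕ → ℝ := fun r => es (r+1) S y / es r S y with hb_def
  have ha : ∀ r ∈ Finset.range m, 0 < a r := fun r hr =>
    div_pos (es_pos (by have := Finset.mem_range.1 hr; omega) hx)
      (es_pos (by have := Finset.mem_range.1 hr; omega) hx)
  have hb : ∀ r ∈ Finset.range m, 0 < b r := fun r hr =>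
    div_pos (es_pos (by have := Finset.mem_range.1 hr; omega) hy)
      (es_pos (by have := Finset.mem_range.1 hr; omega) hy)
  calc (∏ r ∈ Finset.range m, a r) ^ ((1:ℝ)/m) + (∏ r ∈ Finset.range m, b r) ^ ((1:ℝ)/m)
      ≤ (∏ r ∈ Finset.range m, (a r + b r)) ^ ((1:ℝ)/m) := gm_superadd (by omega) ha hb
    _ ≤ (∏ r ∈ Finset.range m, (es (r+1) S (x+y) / es r S (x+y))) ^ ((1:ℝ)/m) := by
        apply Real.rpow_le_rpow (Finset.prod_nonneg fun r hr => (add_pos (ha r hr) (hb r hr)).le)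
          _ (by positivity)
        apply Finset.prod_le_prod (fun r hr => (add_pos (ha r hr) (hb r hr)).le)
        intro r hr
        exact ML r S x y (by have := Finset.mem_range.1 hr; omega) hx hy

lemma es_smul (m : ℕ) (S : Finset ι) (x : ι → ℝ) (t : ℝ) :
    es m S (t • x) = t^m * es m S x := by
  rw [es, es, Finset.mul_sum]
  refine Finset.sum_congr rfl fun u hu => ?_
  rw [Finset.mem_powersetCard] at hu
  calc ∏ i ∈ u, (t • x) i = ∏ i ∈ u, (t * x i) := rfl
    _ = t^m * ∏ i ∈ u, x i := by rw [Finset.prod_mul_distrib, Finset.prod_const, hu.2]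

end Root

end EsTheory

/-- `φ = H_m^(1/m)`. -/
noncomputable def phi (n m : ℕ) (k : Fin n → ℝ) : ℝ := Hm n m k ^ ((1 : ℝ) / m)

/-- The partial derivative `∂φ/∂k_i` at `h`. -/
noncomputable def phid (n m : ℕ) (h : Fin n → ℝ) (i : Fin n) : ℝ :=
  fderiv ℝ (phi n m) h (Pi.single i 1)

/-- The compact pinched cone slab `𝒞 = {k : H₀ ≤ H(k) ≤ H₁, k_i ≥ ε·H(k) ∀ i}`. -/
def cone (n : ℕ) (ε H₀ H₁ : ℝ) : Set (Fin n → ℝ) :=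
  {k | H₀ ≤ ∑ i, k i ∧ (∑ i, k i) ≤ H₁ ∧ ∀ i, ε * (∑ j, k j) ≤ k i}

/-- The Bellman-type extension `φ̃(k) = min_{h ∈ 𝒞} Σ_i ∂φ/∂k_i(h)·k_i`
(realized as an infimum, which is attained since `𝒞` is compact). -/
noncomputable def phiTilde (n m : ℕ) (ε H₀ H₁ : ℝ) (k : Fin n → ℝ) : ℝ :=
  sInf ((fun h => ∑ i, phid n m h i * k i) '' cone n ε H₀ H₁)

section Analysis
variable (n m : ℕ)

/-- The coefficient in `Hm`. -/
noncomputable def cf : ℝ :=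
  ((Nat.factorial m * Nat.factorial (n - m) : ℕ) : ℝ) / (Nat.factorial n : ℝ)

lemma cf_pos : 0 < cf n m := by
  apply div_pos
  · exact_mod_cast Nat.mul_pos (Nat.factorial_pos m) (Nat.factorial_pos (n-m))
  · exact_mod_cast Nat.factorial_pos n

lemma Hm_eq (k : Fin n → ℝ) : Hm n m k = cf n m * es m Finset.univ k := rfl

lemma Hm_pos (hmn : m ≤ n) {k : Fin n → ℝ} (hk : ∀ i, 0 < k i) : 0 < Hm n m k := by
  rw [Hm_eq]
  exact mul_pos (cf_pos n m)
    (es_pos (by simp [Finset.card_univ, hmn]) (fun i _ => hk i))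

/-- The explicit derivative of `Hm`. -/
noncomputable def DHm (h : Fin n → ℝ) : (Fin n → ℝ) →L[ℝ] ℝ :=
  cf n m • ∑ s ∈ Finset.powersetCard m Finset.univ, ∑ i ∈ s, (∏ j ∈ s.erase i, h j) •
      (ContinuousLinearMap.proj i : (Fin n → ℝ) →L[ℝ] ℝ)

lemma DHm_apply (h v : Fin n → ℝ) :
    DHm n m h v = cf n m * ∑ s ∈ Finset.powersetCard m Finset.univ,
      ∑ i ∈ s, (∏ j ∈ s.erase i, h j) * v i := by
  simp [DHm, ContinuousLinearMap.sum_apply, ContinuousLinearMap.smul_apply,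
    ContinuousLinearMap.proj_apply, smul_eq_mul]

lemma hasFDerivAt_Hm (h : Fin n → ℝ) : HasFDerivAt (Hm n m) (DHm n m h) h := by
  have h1 : ∀ s ∈ Finset.powersetCard m (Finset.univ : Finset (Fin n)),
      HasFDerivAt (fun k : Fin n → ℝ => ∏ i ∈ s, k i)
        (∑ i ∈ s, (∏ j ∈ s.erase i, h j) •
          (ContinuousLinearMap.proj i : (Fin n → ℝ) →L[ℝ] ℝ)) h := by
    intro s _
    exact HasFDerivAt.finset_prod (fun i _ => hasFDerivAt_apply i h)
  have h2 := (HasFDerivAt.fun_sum h1).const_mul (cf n m)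
  exact h2

lemma hasFDerivAt_phi {h : Fin n → ℝ} (hpos : 0 < Hm n m h) :
    HasFDerivAt (phi n m)
      ((((1:ℝ)/m) * Hm n m h ^ ((1:ℝ)/m - 1)) • DHm n m h) h :=
  (Real.hasDerivAt_rpow_const (p := (1:ℝ)/m) (Or.inl hpos.ne')).comp_hasFDerivAt h
    (hasFDerivAt_Hm n m h)

lemma sum_phid_mul {h : Fin n → ℝ} (hpos : 0 < Hm n m h) (k : Fin n → ℝ) :
    ∑ i, phid n m h i * k i = fderiv ℝ (phi n m) h k := by
  conv_rhs => rw [pi_eq_sum_univ k, map_sum]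
  refine Finset.sum_congr rfl fun i _ => ?_
  rw [map_smul, smul_eq_mul, mul_comm]
  have hb : (fun j => if i = j then (1:ℝ) else 0) = Pi.single i 1 := by
    funext j
    rw [Pi.single_apply]
    by_cases hij : i = j
    · simp [hij]
    · have hji : ¬ j = i := fun hji => hij hji.symm
      simp [hij, hji]
  rw [hb]
  rfl

lemma DHm_self (hmn : m ≤ n) (h : Fin n → ℝ) : DHm n m h h = m * Hm n m h := by
  rw [DHm_apply, Hm_eq, es]
  have hstep : ∀ s ∈ Finset.powersetCard m (Finset.univ : Finset (Fin n)),
      ∑ i ∈ s, (∏ j ∈ s.erase i, h j) * h i = (m:ℝ) * ∏ j ∈ s, h j := by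
    intro s hs
    rw [Finset.mem_powersetCard] at hs
    have h1 : ∀ i ∈ s, (∏ j ∈ s.erase i, h j) * h i = ∏ j ∈ s, h j := by
      intro i hi
      rw [mul_comm, Finset.mul_prod_erase s h hi]
    rw [Finset.sum_congr rfl h1, Finset.sum_const, nsmul_eq_mul, hs.2]
  rw [Finset.sum_congr rfl hstep, ← Finset.mul_sum]
  ring

lemma euler_phi (hm1 : 1 ≤ m) (hmn : m ≤ n) {h : Fin n → ℝ} (hk : ∀ i, 0 < h i) :
    fderiv ℝ (phi n m) h h = phi n m h := by
  have hpos := Hm_pos n m hmn hk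
  rw [(hasFDerivAt_phi n m hpos).fderiv]
  rw [ContinuousLinearMap.smul_apply, smul_eq_mul, DHm_self n m hmn]
  have hm0 : (m:ℝ) ≠ 0 := by positivity
  have h1 : Hm n m h ^ ((1:ℝ)/m - 1) * Hm n m h = Hm n m h ^ ((1:ℝ)/m) := by
    rw [← Real.rpow_add_one hpos.ne' ((1:ℝ)/m - 1)]
    norm_num
  rw [phi, ← h1]
  field_simp

lemma phi_superadd (hm1 : 1 ≤ m) (hmn : m ≤ n) {x y : Fin n → ℝ}
    (hx : ∀ i, 0 < x i) (hy : ∀ i, 0 < y i) :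
    phi n m x + phi n m y ≤ phi n m (x + y) := by
  have hcard : m ≤ (Finset.univ : Finset (Fin n)).card := by simp [hmn]
  have key := es_root_superadd (S := (Finset.univ : Finset (Fin n))) (x := x) (y := y)
    hm1 hcard (fun i _ => hx i) (fun i _ => hy i)
  have hc : (0:ℝ) ≤ cf n m ^ ((1:ℝ)/m) := Real.rpow_nonneg (cf_pos n m).le _
  have hre : ∀ z : Fin n → ℝ, (∀ i, 0 < z i) →
      phi n m z = cf n m ^ ((1:ℝ)/m) * es m Finset.univ z ^ ((1:ℝ)/m) := by
    intro z hz
    rw [phi, Hm_eq, Real.mul_rpow (cf_pos n m).le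
      (es_pos (by simp [hmn]) (fun i _ => hz i)).le]
  rw [hre x hx, hre y hy, hre (x+y) (fun i => add_pos (hx i) (hy i)), ← mul_add]
  exact mul_le_mul_of_nonneg_left key hc

lemma phi_hom (hm1 : 1 ≤ m) (hmn : m ≤ n) {x : Fin n → ℝ} (hx : ∀ i, 0 < x i)
    {t : ℝ} (ht : 0 < t) : phi n m (t • x) = t * phi n m x := by
  have hm0 : (m:ℝ) ≠ 0 := by positivity
  have h1 : Hm n m (t • x) = t^m * Hm n m x := by
    rw [Hm_eq, Hm_eq, es_smul]; ring
  rw [phi, phi, h1, Real.mul_rpow (by positivity) (Hm_pos n m hmn hx).le]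
  congr 1
  rw [← Real.rpow_natCast t m, ← Real.rpow_mul ht.le]
  rw [show (m:ℝ) * ((1:ℝ)/m) = 1 by field_simp]
  exact Real.rpow_one t

/-- The tangent-plane inequality (from concavity of `phi`). -/
lemma tangent (hm1 : 1 ≤ m) (hmn : m ≤ n) {h k : Fin n → ℝ}
    (hh : ∀ i, 0 < h i) (hk : ∀ i, 0 < k i) :
    phi n m k ≤ fderiv ℝ (phi n m) h k := by
  have hpos := Hm_pos n m hmn hh
  -- the curve g t = phi (h + t k)
  set g : ℝ → ℝ := fun t => phi n m (h + t • k) with hg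
  have hcurve : HasDerivAt (fun t : ℝ => h + t • k) k 0 := by
    have := ((hasDerivAt_id (0:ℝ)).smul_const k).const_add h
    simpa using this
  have hd : HasDerivAt g (fderiv ℝ (phi n m) h k) 0 := by
    have h0 : h + (0:ℝ) • k = h := by simp
    have hpos0 : 0 < Hm n m (h + (0:ℝ) • k) := by rw [h0]; exact hpos
    have hcomp := (hasFDerivAt_phi n m hpos0).comp_hasDerivAt 0 hcurve
    rw [h0] at hcomp
    rw [(hasFDerivAt_phi n m hpos).fderiv]
    exact hcomp
  have hslope : ∀ t ∈ Set.Ioi (0:ℝ), phi n m k ≤ slope g 0 t := by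
    intro t ht
    rw [Set.mem_Ioi] at ht
    have hsup := phi_superadd n m hm1 hmn (y := t • k) hh (fun i => mul_pos ht (hk i))
    have hhom := phi_hom n m hm1 hmn hk ht
    have hg0 : g 0 = phi n m h := by simp [hg]
    have hgt : phi n m h + t * phi n m k ≤ g t := by
      rw [hg]
      calc phi n m h + t * phi n m k = phi n m h + phi n m (t • k) := by rw [hhom]
        _ ≤ phi n m (h + t • k) := hsup
    rw [slope_def_field, sub_zero, hg0, le_div_iff₀ ht]
    linarith [hgt]
  have htend : Filter.Tendsto (slope g 0) (nhdsWithin 0 (Set.Ioi 0)) (nhds (fderiv ℝ (phi n m) h k)) := by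
    have := hasDerivAt_iff_tendsto_slope.1 hd
    exact this.mono_left (nhdsWithin_mono 0 (fun t ht => Set.mem_compl_singleton_iff.2 (ne_of_gt ht)))
  exact ge_of_tendsto htend (eventually_nhdsWithin_of_forall hslope)

end Analysis

section Main
variable {n m : ℕ} {H₀ H₁ ε : ℝ}

lemma cone_pos (hH0 : 0 < H₀) (hε1 : 0 < ε) {h : Fin n → ℝ}
    (hh : h ∈ cone n ε H₀ H₁) : ∀ i, 0 < h i := by
  intro i
  have h1 : 0 < ε * H₀ := mul_pos hε1 hH0
  have h2 : ε * H₀ ≤ ε * ∑ j, h j := mul_le_mul_of_nonneg_left hh.1 hε1.le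
  linarith [hh.2.2 i]

lemma cone_coord_le (hH0 : 0 < H₀) (hε1 : 0 < ε) {h : Fin n → ℝ}
    (hh : h ∈ cone n ε H₀ H₁) : ∀ i, h i ≤ H₁ := by
  intro i
  have h1 : h i ≤ ∑ j, h j :=
    Finset.single_le_sum (fun j _ => (cone_pos hH0 hε1 hh j).le) (Finset.mem_univ i)
  linarith [hh.2.1]

lemma cone_nonempty (hn : 2 ≤ n) (hH0 : 0 < H₀) (hH01 : H₀ ≤ H₁) (hε1 : 0 < ε)
    (hε2 : ε ≤ 1 / n) : (fun _ => H₀ / n) ∈ cone n ε H₀ H₁ := by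
  have hn0 : (0:ℝ) < n := by
    have : 0 < n := by omega
    exact_mod_cast this
  have hsum : ∑ _i : Fin n, H₀ / (n:ℝ) = H₀ := by
    rw [Finset.sum_const, Finset.card_univ, Fintype.card_fin, nsmul_eq_mul,
      mul_div_cancel₀ _ (ne_of_gt hn0)]
  refine ⟨by rw [hsum], by rw [hsum]; exact hH01, ?_⟩
  intro i
  show ε * (∑ _j : Fin n, H₀ / (n:ℝ)) ≤ H₀ / n
  rw [hsum]
  calc ε * H₀ ≤ (1/n) * H₀ := mul_le_mul_of_nonneg_right hε2 hH0.le
    _ = H₀ / n := by ring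

lemma phid_eq (hmn : m ≤ n) (hH0 : 0 < H₀) (hε1 : 0 < ε) {h : Fin n → ℝ}
    (hh : h ∈ cone n ε H₀ H₁) (i : Fin n) :
    phid n m h i = (((1:ℝ)/m) * Hm n m h ^ ((1:ℝ)/m - 1)) * DHm n m h (Pi.single i 1) := by
  rw [phid, (hasFDerivAt_phi n m (Hm_pos n m hmn (cone_pos hH0 hε1 hh))).fderiv]
  rfl

lemma phid_bounds (hm1 : 1 ≤ m) (hmn : m ≤ n) (hH0 : 0 < H₀) (hε1 : 0 < ε) :
    ∃ M : ℝ, ∀ h ∈ cone n ε H₀ H₁, ∀ i, 0 ≤ phid n m h i ∧ phid n m h i ≤ M := by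
  classical
  set P := ε * H₀ with hP
  have hPpos : 0 < P := mul_pos hε1 hH0
  set Q := max 1 H₁ with hQ
  have hQ1 : (1:ℝ) ≤ Q := le_max_left _ _
  have hQ0 : (0:ℝ) < Q := lt_of_lt_of_le one_pos hQ1
  set δ := cf n m * P ^ m with hδ
  have hδpos : 0 < δ := mul_pos (cf_pos n m) (by positivity)
  set N := (Finset.powersetCard m (Finset.univ : Finset (Fin n))).card with hN
  refine ⟨((1:ℝ)/m) * δ ^ ((1:ℝ)/m - 1) * (cf n m * (N * Q ^ n)), ?_⟩
  intro h hh i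
  have hpos := cone_pos hH0 hε1 hh
  have hle := cone_coord_le hH0 hε1 hh
  have hhQ : ∀ j, h j ≤ Q := fun j => le_trans (hle j) (le_max_right _ _)
  have hHm : 0 < Hm n m h := Hm_pos n m hmn hpos
  -- lower bound on Hm
  have hδle : δ ≤ Hm n m h := by
    rw [Hm]
    obtain ⟨t₀, ht₀⟩ := Finset.powersetCard_nonempty.2
      (by simp [Finset.card_univ, hmn] : m ≤ (Finset.univ : Finset (Fin n)).card)
    have h1 : P ^ m ≤ ∏ j ∈ t₀, h j := by
      have := Finset.prod_le_prod (s := t₀) (f := fun _ => P) (g := h)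
        (fun j _ => hPpos.le) (fun j hj => by
          have h2 : ε * H₀ ≤ ε * ∑ l, h l := mul_le_mul_of_nonneg_left hh.1 hε1.le
          have := hh.2.2 j
          simp only [hP]
          linarith)
      rwa [Finset.prod_const, (Finset.mem_powersetCard.1 ht₀).2] at this
    have h2 : ∏ j ∈ t₀, h j ≤ ∑ s ∈ Finset.powersetCard m Finset.univ, ∏ j ∈ s, h j :=
      Finset.single_le_sum (f := fun s => ∏ j ∈ s, h j)
        (fun s _ => Finset.prod_nonneg fun j _ => (hpos j).le) ht₀
    rw [hδ]
    have := mul_le_mul_of_nonneg_left (le_trans h1 h2) (cf_pos n m).le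
    exact this
  -- bound on the gradient of Hm
  have hgrad0 : 0 ≤ DHm n m h (Pi.single i 1) := by
    rw [DHm_apply]
    apply mul_nonneg (cf_pos n m).le
    apply Finset.sum_nonneg; intro s _
    apply Finset.sum_nonneg; intro j _
    apply mul_nonneg (Finset.prod_nonneg fun l _ => (hpos l).le)
    rw [Pi.single_apply]
    split <;> norm_num
  have hgradM : DHm n m h (Pi.single i (1:ℝ)) ≤ cf n m * (N * Q ^ n) := by
    rw [DHm_apply]
    apply mul_le_mul_of_nonneg_left _ (cf_pos n m).le
    calc ∑ s ∈ Finset.powersetCard m Finset.univ, ∑ j ∈ s, (∏ l ∈ s.erase j, h l) * (Pi.single i 1 : Fin n → ℝ) j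
        ≤ ∑ _s ∈ Finset.powersetCard m Finset.univ, Q ^ n := by
          apply Finset.sum_le_sum
          intro s hs
          have hsub : s ⊆ Finset.univ := (Finset.mem_powersetCard.1 hs).1
          have hprod : ∀ j, ∏ l ∈ s.erase j, h l ≤ Q ^ n := by
            intro j
            calc ∏ l ∈ s.erase j, h l ≤ ∏ l ∈ s.erase j, Q :=
                  Finset.prod_le_prod (fun l _ => (hpos l).le) (fun l _ => hhQ l)
              _ = Q ^ (s.erase j).card := Finset.prod_const Q
              _ ≤ Q ^ n := pow_le_pow_right₀ hQ1
                  (le_trans (Finset.card_le_card (Finset.erase_subset j s))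
                    (le_trans (Finset.card_le_card hsub) (by simp)))
          calc ∑ j ∈ s, (∏ l ∈ s.erase j, h l) * (Pi.single i 1 : Fin n → ℝ) j
              ≤ ∑ j ∈ s, Q ^ n * (Pi.single i 1 : Fin n → ℝ) j := by
                apply Finset.sum_le_sum
                intro j _
                have hs1 : (0:ℝ) ≤ (Pi.single i 1 : Fin n → ℝ) j := by
                  rw [Pi.single_apply]; split <;> norm_num
                exact mul_le_mul_of_nonneg_right (hprod j) hs1
            _ = Q ^ n * ∑ j ∈ s, (Pi.single i 1 : Fin n → ℝ) j := by rw [Finset.mul_sum]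
            _ ≤ Q ^ n * 1 := by
                apply mul_le_mul_of_nonneg_left _ (by positivity)
                simp only [Pi.single_apply]
                rw [Finset.sum_ite_eq' s i (fun _ => (1:ℝ))]
                split <;> norm_num
            _ = Q ^ n := mul_one _
      _ = N * Q ^ n := by rw [Finset.sum_const, hN, nsmul_eq_mul]
  -- conclude
  rw [phid_eq hmn hH0 hε1 hh i]
  have hrp : (0:ℝ) ≤ Hm n m h ^ ((1:ℝ)/m - 1) := Real.rpow_nonneg hHm.le _
  have hrple : Hm n m h ^ ((1:ℝ)/m - 1) ≤ δ ^ ((1:ℝ)/m - 1) := by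
    apply Real.rpow_le_rpow_of_nonpos hδpos hδle
    have hm0 : (1:ℝ) ≤ (m:ℝ) := by exact_mod_cast hm1
    have : (1:ℝ)/m ≤ 1 := by
      rw [div_le_one (by linarith)]; exact hm0
    linarith
  have hm0 : (0:ℝ) ≤ (1:ℝ)/m := by positivity
  constructor
  · apply mul_nonneg (mul_nonneg hm0 hrp) hgrad0
  · apply mul_le_mul (mul_le_mul_of_nonneg_left hrple hm0) hgradM hgrad0
    positivity

end Main

section Final
variable {n m : ℕ} {H₀ H₁ ε : ℝ}

/-- The value set over which the infimum is taken. -/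
def Wset (n m : ℕ) (ε H₀ H₁ : ℝ) (k : Fin n → ℝ) : Set ℝ :=
  (fun h => ∑ i, phid n m h i * k i) '' cone n ε H₀ H₁

lemma phiTilde_eq (k : Fin n → ℝ) :
    phiTilde n m ε H₀ H₁ k = sInf (Wset n m ε H₀ H₁ k) := rfl

/-- The Bellman extension `φ̃` of `φ = H_m^(1/m)` relative to the compact pinched set `𝒞`
is (i) concave on all of `ℝ^n`, (ii) positively homogeneous of degree one, and
(iii) coincides with `φ` on `𝒞`. -/
theorem stmt10 (n m : ℕ) (hn : 2 ≤ n) (hm1 : 1 ≤ m) (hmn : m ≤ n)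
    (H₀ H₁ ε : ℝ) (hH0 : 0 < H₀) (hH01 : H₀ ≤ H₁) (hε1 : 0 < ε) (hε2 : ε ≤ 1 / n) :
    ConcaveOn ℝ Set.univ (phiTilde n m ε H₀ H₁) ∧
    (∀ lam > (0 : ℝ), ∀ k : Fin n → ℝ,
      phiTilde n m ε H₀ H₁ (lam • k) = lam * phiTilde n m ε H₀ H₁ k) ∧
    (∀ k ∈ cone n ε H₀ H₁, phiTilde n m ε H₀ H₁ k = phi n m k) := by
  have hcne : (fun _ => H₀ / n : Fin n → ℝ) ∈ cone n ε H₀ H₁ :=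
    cone_nonempty hn hH0 hH01 hε1 hε2
  obtain ⟨M, hM⟩ := phid_bounds (H₁ := H₁) hm1 hmn hH0 hε1
  have hne : ∀ k : Fin n → ℝ, (Wset n m ε H₀ H₁ k).Nonempty :=
    fun k => ⟨_, ⟨_, hcne, rfl⟩⟩
  have hbdd : ∀ k : Fin n → ℝ, BddBelow (Wset n m ε H₀ H₁ k) := by
    intro k
    refine ⟨-(M * ∑ i, |k i|), ?_⟩
    rintro v ⟨h, hh, rfl⟩
    have hterm : ∀ i, -(M * |k i|) ≤ phid n m h i * k i := by
      intro i
      have h1 := (hM h hh i).1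
      have h2 := (hM h hh i).2
      have habs : |phid n m h i * k i| ≤ M * |k i| := by
        rw [abs_mul, abs_of_nonneg h1]
        exact mul_le_mul_of_nonneg_right h2 (abs_nonneg _)
      linarith [neg_abs_le (phid n m h i * k i)]
    calc -(M * ∑ i, |k i|) = ∑ i, -(M * |k i|) := by
          rw [Finset.mul_sum, ← Finset.sum_neg_distrib]
      _ ≤ ∑ i, phid n m h i * k i := Finset.sum_le_sum fun i _ => hterm i
  refine ⟨⟨convex_univ, ?_⟩, ?_, ?_⟩
  · intro x _ y _ a b ha hb hab
    rw [smul_eq_mul, smul_eq_mul, phiTilde_eq, phiTilde_eq, phiTilde_eq]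
    apply le_csInf (hne _)
    rintro v ⟨h, hh, rfl⟩
    show _ ≤ ∑ i, phid n m h i * (a • x + b • y) i
    have hx : sInf (Wset n m ε H₀ H₁ x) ≤ ∑ i, phid n m h i * x i :=
      csInf_le (hbdd x) ⟨h, hh, rfl⟩
    have hy' : sInf (Wset n m ε H₀ H₁ y) ≤ ∑ i, phid n m h i * y i :=
      csInf_le (hbdd y) ⟨h, hh, rfl⟩
    have hlin : ∑ i, phid n m h i * (a • x + b • y) i
        = a * ∑ i, phid n m h i * x i + b * ∑ i, phid n m h i * y i := by
      rw [Finset.mul_sum, Finset.mul_sum, ← Finset.sum_add_distrib]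
      refine Finset.sum_congr rfl fun i _ => ?_
      have hv : (a • x + b • y) i = a * x i + b * y i := rfl
      rw [hv]; ring
    rw [hlin]
    exact add_le_add (mul_le_mul_of_nonneg_left hx ha) (mul_le_mul_of_nonneg_left hy' hb)
  · intro lam hlam k
    have hfun : (fun h => ∑ i, phid n m h i * (lam • k) i)
        = (fun v => lam • v) ∘ (fun h => ∑ i, phid n m h i * k i) := by
      funext h
      show ∑ i, phid n m h i * (lam * k i) = lam * ∑ i, phid n m h i * k i
      rw [Finset.mul_sum]
      exact Finset.sum_congr rfl fun i _ => by ring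
    have him : Wset n m ε H₀ H₁ (lam • k) = lam • (Wset n m ε H₀ H₁ k) := by
      show (fun h => ∑ i, phid n m h i * (lam • k) i) '' cone n ε H₀ H₁ = _
      rw [hfun, Set.image_comp]
      exact Set.image_smul (a := lam) (t := (fun h => ∑ i, phid n m h i * k i) '' cone n ε H₀ H₁)
    rw [phiTilde_eq, phiTilde_eq, him, Real.sInf_smul_of_nonneg hlam.le, smul_eq_mul]
  · intro k hk
    have hkpos := cone_pos hH0 hε1 hk
    have hHmk := Hm_pos n m hmn hkpos
    rw [phiTilde_eq]
    apply le_antisymm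
    · apply csInf_le (hbdd k)
      exact ⟨k, hk, by
        show ∑ i, phid n m k i * k i = phi n m k
        rw [sum_phid_mul n m hHmk k, euler_phi n m hm1 hmn hkpos]⟩
    · apply le_csInf (hne k)
      rintro v ⟨h, hh, rfl⟩
      show phi n m k ≤ ∑ i, phid n m h i * k i
      rw [sum_phid_mul n m (Hm_pos n m hmn (cone_pos hH0 hε1 hh)) k]
      exact tangent n m hm1 hmn (cone_pos hH0 hε1 hh) hkpos

end Final
end
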